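/- arXiv:1605.06387 — 7 statements merged into one kernel-verified Lean document; each statement's English description precedes it below -/
import Mathlib

section
/- For all integers n ≥ 1, r ≥ 1 and k ≥ 1: (a) every F ⊆ [n]^r with |F| > (k−1)·n^{r−1} contains k pairwise disjoint edges; (b) if k−1 ≤ n, there exists F ⊆ [n]^r with |F| = (k−1)·n^{r−1} containing no k pairwise disjoint edges. Equivalently, g(n,r,k), the smallest number such that every sub-hypergraph of [n]^r of size larger than it has a matching of size k, equals (k−1)·n^{r−1}. -/
/-- Two edges of `[n]^r` (viewed as functions `Fin r → Fin n`) are disjoint if they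
differ in every coordinate. -/
def pairDisjoint {n r : ℕ} (e f : Fin r → Fin n) : Prop := ∀ i, e i ≠ f i

theorem stmt0 (n r k : ℕ) (hn : 1 ≤ n) (hr : 1 ≤ r) (hk : 1 ≤ k) :
    (∀ F : Finset (Fin r → Fin n), (k - 1) * n ^ (r - 1) < F.card →
      ∃ M : Finset (Fin r → Fin n), M ⊆ F ∧ M.card = k ∧
        (M : Set (Fin r → Fin n)).Pairwise pairDisjoint) ∧
    (k - 1 ≤ n →
      ∃ F : Finset (Fin r → Fin n), F.card = (k - 1) * n ^ (r - 1) ∧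
        ¬ ∃ M : Finset (Fin r → Fin n), M ⊆ F ∧ M.card = k ∧
          (M : Set (Fin r → Fin n)).Pairwise pairDisjoint) := by
  obtain ⟨s, rfl⟩ : ∃ s, r = s + 1 := ⟨r - 1, by omega⟩
  obtain ⟨m, rfl⟩ : ∃ m, k = m + 1 := ⟨k - 1, by omega⟩
  obtain ⟨p, rfl⟩ : ∃ p, n = p + 1 := ⟨n - 1, by omega⟩
  simp only [Nat.add_sub_cancel]
  constructor
  · intro F hF
    set φ : (Fin (s+1) → Fin (p+1)) → (Fin s → Fin (p+1)) :=
      fun e j => e j.succ - e 0 with hφ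
    have hmaps : ∀ e ∈ F, φ e ∈ (Finset.univ : Finset (Fin s → Fin (p+1))) := by
      intro e _; exact Finset.mem_univ _
    have hcard : (Finset.univ : Finset (Fin s → Fin (p+1))).card * m < F.card := by
      rw [Finset.card_univ]
      simpa [Nat.mul_comm, Fintype.card_fun] using hF
    obtain ⟨y, -, hy⟩ :=
      Finset.exists_lt_card_fiber_of_mul_lt_card_of_maps_to hmaps hcard
    obtain ⟨M, hMsub, hMcard⟩ :=
      Finset.exists_subset_card_eq (s := F.filter fun e => φ e = y) (n := m + 1) (by omega)
    refine ⟨M, hMsub.trans (Finset.filter_subset _ _), hMcard, ?_⟩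
    intro e he f hf hne
    have he' := Finset.mem_filter.mp (hMsub he)
    have hf' := Finset.mem_filter.mp (hMsub hf)
    have hef : ∀ j : Fin s, e j.succ - e 0 = f j.succ - f 0 := by
      intro j
      have : φ e j = φ f j := by rw [he'.2, hf'.2]
      simpa [hφ] using this
    have h0 : e 0 ≠ f 0 := by
      intro h0
      apply hne
      funext i
      refine Fin.cases h0 (fun j => ?_) i
      have := hef j
      rw [h0] at this
      exact sub_left_inj.mp this
    intro i
    refine Fin.cases h0 (fun j hji => ?_) i
    have := hef j
    rw [hji] at this
    exact h0 (sub_right_inj.mp this)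
  · intro hkn
    obtain ⟨S, -, hScard⟩ :=
      Finset.exists_subset_card_eq (s := (Finset.univ : Finset (Fin (p+1)))) (n := m)
        (by simpa using hkn)
    have hinj : Function.Injective
        (fun q : Fin (p+1) × (Fin s → Fin (p+1)) => Fin.cons q.1 q.2 :
          Fin (p+1) × (Fin s → Fin (p+1)) → Fin (s+1) → Fin (p+1)) := by
      rintro ⟨a, b⟩ ⟨c, d⟩ h
      have h1 : a = c := by
        have := congrFun h 0
        simpa using this
      have h2 : b = d := by
        funext j
        have := congrFun h j.succ
        simpa using this
      simp [h1, h2]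
    refine ⟨(S ×ˢ Finset.univ).image
      (fun q : Fin (p+1) × (Fin s → Fin (p+1)) => Fin.cons q.1 q.2), ?_, ?_⟩
    · rw [Finset.card_image_of_injective _ hinj, Finset.card_product,
        Finset.card_univ, hScard, Fintype.card_fun]
      simp
    · rintro ⟨M, hMF, hMcard, hMpair⟩
      have hmaps : ∀ e ∈ M, e 0 ∈ S := by
        intro e he
        obtain ⟨q, hq, hqe⟩ := Finset.mem_image.mp (hMF he)
        have : e 0 = q.1 := by rw [← hqe]; simp
        rw [this]
        exact (Finset.mem_product.mp hq).1
      have hlt : S.card < M.card := by rw [hScard, hMcard]; omega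
      obtain ⟨x, hx, z, hz, hxz, hxz0⟩ :=
        Finset.exists_ne_map_eq_of_card_lt_of_maps_to hlt hmaps
      exact hMpair hx hz hxz 0 hxz0
end

section
/- Let V be a finite linearly ordered set, let x < y be elements of V, and let (F_i)_{i ∈ I} be a finite family of hypergraphs on V (each F_i a finite family of finite subsets of V). If the family (s_{xy}(F_i))_{i ∈ I} admits a rainbow matching, then so does (F_i)_{i ∈ I}. -/
/-- The shift `s_{xy}(e)` of an edge `e` of the hypergraph `H`. -/
def shiftEdge {V : Type*} [DecidableEq V] (H : Finset (Finset V)) (x y : V)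
    (e : Finset V) : Finset V :=
  if y ∈ e ∧ x ∉ e ∧ insert x (e.erase y) ∉ H then insert x (e.erase y) else e

/-- The shifted hypergraph `s_{xy}(H) = {s_{xy}(e) : e ∈ H}`. -/
def shiftH {V : Type*} [DecidableEq V] (x y : V) (H : Finset (Finset V)) :
    Finset (Finset V) :=
  H.image (shiftEdge H x y)

private lemma dis_swap {V : Type*} [DecidableEq V] {x y : V} (hxy : x ≠ y)
    {A B : Finset V} (h : Disjoint A B) :
    Disjoint (insert y (A.erase x)) (insert x (B.erase y)) := by
  rw [Finset.disjoint_left]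
  intro a ha hb
  rcases Finset.mem_insert.mp ha with rfl | ha
  · rcases Finset.mem_insert.mp hb with h' | h'
    · exact hxy h'.symm
    · exact Finset.notMem_erase _ _ h'
  · rcases Finset.mem_insert.mp hb with rfl | h'
    · exact Finset.notMem_erase _ _ ha
    · exact Finset.disjoint_left.mp h (Finset.mem_of_mem_erase ha)
        (Finset.mem_of_mem_erase h')

private lemma dis_ins {V : Type*} [DecidableEq V] {x y : V}
    {A C : Finset V} (h : Disjoint A C) (hy : y ∉ C) :
    Disjoint (insert y (A.erase x)) C := by
  rw [Finset.disjoint_left]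
  intro a ha hc
  rcases Finset.mem_insert.mp ha with rfl | ha
  · exact hy hc
  · exact Finset.disjoint_left.mp h (Finset.mem_of_mem_erase ha) hc

theorem stmt1 {V I : Type*} [Fintype V] [LinearOrder V] [Fintype I]
    (x y : V) (hxy : x < y) (F : I → Finset (Finset V))
    (h : ∃ e : I → Finset V, (∀ i, e i ∈ shiftH x y (F i)) ∧
      ∀ i j, i ≠ j → Disjoint (e i) (e j)) :
    ∃ e : I → Finset V, (∀ i, e i ∈ F i) ∧ ∀ i j, i ≠ j → Disjoint (e i) (e j) := by
  classical
  obtain ⟨e, he, hdis⟩ := h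
  choose f hf hfe using fun i => Finset.mem_image.mp (he i)
  by_cases hall : ∀ i, e i = f i
  · exact ⟨e, fun i => (hall i) ▸ hf i, hdis⟩
  push_neg at hall
  obtain ⟨i₀, hi₀⟩ := hall
  have hxy' : x ≠ y := ne_of_lt hxy
  have hcond : y ∈ f i₀ ∧ x ∉ f i₀ ∧ insert x ((f i₀).erase y) ∉ F i₀ := by
    by_contra hc
    exact hi₀ (hfe i₀ ▸ (by rw [shiftEdge, if_neg hc] : shiftEdge (F i₀) x y (f i₀) = f i₀))
  have hei₀ : e i₀ = insert x ((f i₀).erase y) := by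
    rw [← hfe i₀, shiftEdge, if_pos hcond]
  have hx_e : x ∈ e i₀ := hei₀ ▸ Finset.mem_insert_self _ _
  have hy_e : y ∉ e i₀ := by
    rw [hei₀, Finset.mem_insert]
    rintro (h' | h')
    · exact hxy' h'.symm
    · exact Finset.notMem_erase y _ h'
  have hfi₀ : f i₀ = insert y ((e i₀).erase x) := by
    rw [hei₀, Finset.erase_insert (fun hx => hcond.2.1 (Finset.mem_of_mem_erase hx)),
      Finset.insert_erase hcond.1]
  have hej : ∀ j, j ≠ i₀ → e j = f j := by
    intro j hj
    by_contra hne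
    have hcj : y ∈ f j ∧ x ∉ f j ∧ insert x ((f j).erase y) ∉ F j := by
      by_contra hc
      exact hne (hfe j ▸ (by rw [shiftEdge, if_neg hc] : shiftEdge (F j) x y (f j) = f j))
    have hxj : x ∈ e j := by
      rw [← hfe j, shiftEdge, if_pos hcj]; exact Finset.mem_insert_self _ _
    exact Finset.disjoint_left.mp (hdis j i₀ hj) hxj hx_e
  have hxej : ∀ j, j ≠ i₀ → x ∉ e j := fun j hj hx =>
    Finset.disjoint_left.mp (hdis j i₀ hj) hx hx_e
  by_cases hy : ∃ j, j ≠ i₀ ∧ y ∈ e j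
  · obtain ⟨j₀, hj₀, hyj₀⟩ := hy
    have hyuniq : ∀ j, j ≠ j₀ → y ∉ e j := fun j hj hyj =>
      Finset.disjoint_left.mp (hdis j j₀ hj) hyj hyj₀
    have hfj₀ := hej j₀ hj₀
    have hmem : insert x ((e j₀).erase y) ∈ F j₀ := by
      by_contra hc
      have hx' : x ∈ e j₀ := by
        rw [← hfe j₀, shiftEdge, if_pos ⟨hfj₀ ▸ hyj₀, hfj₀ ▸ hxej j₀ hj₀, hfj₀ ▸ hc⟩]
        exact Finset.mem_insert_self _ _
      exact hxej j₀ hj₀ hx'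
    refine ⟨fun i => if i = i₀ then insert y ((e i₀).erase x)
      else if i = j₀ then insert x ((e j₀).erase y) else e i, ?_, ?_⟩
    · intro i
      by_cases h1 : i = i₀
      · simp only [if_pos h1, h1]; exact hfi₀ ▸ hf i₀
      · by_cases h2 : i = j₀
        · rw [h2] at h1 ⊢; simp only [if_neg h1, if_pos rfl]; exact hmem
        · simp only [if_neg h1, if_neg h2]; exact (hej i h1) ▸ hf i
    · intro i j hij
      by_cases h1 : i = i₀
      · have hj1 : j ≠ i₀ := fun hh => hij (h1.trans hh.symm)
        simp only [if_pos h1, if_neg hj1]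
        by_cases h2 : j = j₀
        · simp only [if_pos h2]
          exact dis_swap hxy' (hdis i₀ j₀ (fun hh => hj₀ hh.symm))
        · simp only [if_neg h2]
          exact dis_ins (hdis i₀ j (fun hh => hj1 hh.symm)) (hyuniq j h2)
      · by_cases h2 : i = j₀
        · have hj2 : j ≠ j₀ := fun hh => hij (h2.trans hh.symm)
          simp only [if_neg h1, if_pos h2, if_neg hj2]
          by_cases h3 : j = i₀
          · simp only [if_pos h3]
            exact (dis_swap hxy' (hdis i₀ j₀ (fun hh => hj₀ hh.symm))).symm
          · simp only [if_neg h3]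
            exact dis_ins (hdis j₀ j (fun hh => hj2 hh.symm)) (hxej j h3)
        · simp only [if_neg h1, if_neg h2]
          by_cases h3 : j = i₀
          · simp only [if_pos h3]
            exact (dis_ins (hdis i₀ i (fun hh => h1 hh.symm)) (hyuniq i h2)).symm
          · by_cases h4 : j = j₀
            · simp only [if_neg h3, if_pos h4]
              exact (dis_ins (hdis j₀ i (fun hh => h2 hh.symm)) (hxej i h1)).symm
            · simp only [if_neg h3, if_neg h4]
              exact hdis i j hij
  · push_neg at hy
    refine ⟨fun i => if i = i₀ then insert y ((e i₀).erase x) else e i, ?_, ?_⟩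
    · intro i
      by_cases h1 : i = i₀
      · simp only [if_pos h1, h1]; exact hfi₀ ▸ hf i₀
      · simp only [if_neg h1]; exact (hej i h1) ▸ hf i
    · intro i j hij
      by_cases h1 : i = i₀
      · have hj1 : j ≠ i₀ := fun hh => hij (h1.trans hh.symm)
        simp only [if_pos h1, if_neg hj1]
        exact dis_ins (hdis i₀ j (fun hh => hj1 hh.symm)) (hy j hj1)
      · simp only [if_neg h1]
        by_cases h2 : j = i₀
        · simp only [if_pos h2]
          exact (dis_ins (hdis i₀ i (fun hh => h1 hh.symm)) (hy i h1)).symm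
        · simp only [if_neg h2]
          exact hdis i j hij
end

section
/- For r ≥ 2 and every sequence σ ∈ Ψ_{r−1} (a sequence over {∧, ∨} of length at most r−2): (1) f_r(σ) = n·f_{r−1}(σ); (2) f_r((∧)⌢σ) = f_{r−1}(σ); (3) f_r((∨)⌢σ) = n^{r−1} + (n−1)·f_{r−1}(σ), where (∧)⌢σ and (∨)⌢σ denote σ prefixed by ∧ and ∨ respectively. -/
/-- Whether the `j`-th coordinate of the edge `e` equals the distinguished vertex
(the first vertex of its side, representing `v_{j+1} = 1`). -/
def vcond {n r : ℕ} (e : Fin r → Fin n) (j : ℕ) : Bool :=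
  if h : j < r then decide ((e ⟨j, h⟩ : ℕ) = 0) else false

/-- The nested condition `v_{j+1} ∈ e σ₁ (v_{j+2} ∈ e σ₂ (⋯))` determined by a
sequence `σ` over `{∧, ∨}` (where `false` encodes `∧` and `true` encodes `∨`). -/
def edgeCond {n r : ℕ} (e : Fin r → Fin n) : ℕ → List Bool → Bool
  | j, [] => vcond e j
  | j, false :: s => vcond e j && edgeCond e (j + 1) s
  | j, true :: s => vcond e j || edgeCond e (j + 1) s

/-- `F_r(σ)`: the set of edges of `[n]^r` satisfying the nested condition given by `σ`. -/
def Fset (n r : ℕ) (σ : List Bool) : Finset (Fin r → Fin n) :=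
  Finset.univ.filter (fun e => edgeCond e 0 σ = true)

/-- `f_r(σ) = |F_r(σ)|`. -/
def fval (n r : ℕ) (σ : List Bool) : ℕ := (Fset n r σ).card

/-- `Ψ_r`: the sequences over `{∧, ∨}` of length at most `r - 1`. -/
def PsiSet (r : ℕ) : Finset (List Bool) :=
  (Finset.range r).biUnion (fun m => (Finset.univ : Finset (Fin m → Bool)).image List.ofFn)

/-- The set of values `{f_r(σ) : σ ∈ Σ_r}`, where `f_r(α) = 0` and `f_r(ω) = n ^ r`. -/
def Nvals (n r : ℕ) : Finset ℕ :=
  insert 0 (insert (n ^ r) ((PsiSet r).image (fval n r)))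

/-- `N_r(i)`: the `(i+1)`-st smallest element of `{f_r(σ) : σ ∈ Σ_r}`. -/
def Nseq (n r i : ℕ) : ℕ := (Finset.sort (Nvals n r) (· ≤ ·)).getD i 0

-- helper lemmas
lemma vcond_tail {n m : ℕ} (e : Fin (m+1) → Fin n) (j : ℕ) :
    vcond e (j+1) = vcond (Fin.tail e) j := by
  unfold vcond
  by_cases h : j < m
  · rw [dif_pos h, dif_pos (Nat.succ_lt_succ h)]
    rfl
  · rw [dif_neg h, dif_neg (by omega)]

lemma edgeCond_tail {n m : ℕ} (e : Fin (m+1) → Fin n) :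
    ∀ (s : List Bool) (j : ℕ), edgeCond e (j+1) s = edgeCond (Fin.tail e) j s
  | [], j => vcond_tail e j
  | false :: s, j => by
      rw [edgeCond, edgeCond, vcond_tail, edgeCond_tail e s (j+1)]
  | true :: s, j => by
      rw [edgeCond, edgeCond, vcond_tail, edgeCond_tail e s (j+1)]

lemma vcond_snoc {n m : ℕ} (g : Fin m → Fin n) (x : Fin n) {j : ℕ} (h : j < m) :
    vcond (Fin.snoc g x : Fin (m+1) → Fin n) j = vcond g j := by
  unfold vcond
  rw [dif_pos (by omega : j < m + 1), dif_pos h]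
  have : (Fin.snoc g x : Fin (m+1) → Fin n) ⟨j, by omega⟩ = g ⟨j, h⟩ := by
    have := Fin.snoc_castSucc (α := fun _ => Fin n) x g ⟨j, h⟩
    simpa [Fin.castSucc, Fin.castAdd, Fin.castLE] using this
  rw [this]

lemma edgeCond_snoc {n m : ℕ} (g : Fin m → Fin n) (x : Fin n) :
    ∀ (s : List Bool) (j : ℕ), j + s.length < m →
      edgeCond (Fin.snoc g x : Fin (m+1) → Fin n) j s = edgeCond g j s
  | [], j, h => vcond_snoc g x (by simpa using h)
  | false :: s, j, h => by
      rw [edgeCond, edgeCond, vcond_snoc g x (by simp at h; omega),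
        edgeCond_snoc g x s (j+1) (by simp at h; omega)]
  | true :: s, j, h => by
      rw [edgeCond, edgeCond, vcond_snoc g x (by simp at h; omega),
        edgeCond_snoc g x s (j+1) (by simp at h; omega)]

lemma vcond_cons_zero {n m : ℕ} (x : Fin n) (g : Fin m → Fin n) :
    vcond (Fin.cons x g : Fin (m+1) → Fin n) 0 = decide ((x : ℕ) = 0) := by
  unfold vcond
  rw [dif_pos (Nat.succ_pos m)]
  congr 1

lemma fval_card {n r : ℕ} (σ : List Bool) :
    fval n r σ = ∑ e : Fin r → Fin n, (if edgeCond e 0 σ = true then 1 else 0) := by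
  rw [fval, Fset, Finset.card_filter]

theorem stmt2 (n r : ℕ) (hr : 2 ≤ r) (σ : List Bool) (hσ : σ ∈ PsiSet (r - 1)) :
    fval n r σ = n * fval n (r - 1) σ ∧
    fval n r (false :: σ) = fval n (r - 1) σ ∧
    fval n r (true :: σ) = n ^ (r - 1) + (n - 1) * fval n (r - 1) σ := by
  obtain ⟨m, rfl⟩ : ∃ m, r = m + 1 := ⟨r - 1, by omega⟩
  simp only [Nat.add_sub_cancel] at hσ ⊢
  have hm : 1 ≤ m := by omega
  have hlen : σ.length < m := by
    simp only [PsiSet, Finset.mem_biUnion, Finset.mem_range, Finset.mem_image] at hσ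
    obtain ⟨k, hk, f, -, rfl⟩ := hσ
    simpa using hk
  -- n = 0 case
  rcases Nat.eq_zero_or_pos n with rfl | hn
  · have key : ∀ τ : List Bool, fval 0 (m+1) τ = 0 := by
      intro τ
      rw [fval_card]
      exact Finset.sum_eq_zero (fun e _ => absurd (e ⟨0, by omega⟩).isLt (by omega))
    have key2 : fval 0 m σ = 0 := by
      rw [fval_card]
      refine Finset.sum_eq_zero (fun e _ => absurd (e ⟨0, by omega⟩).isLt (by omega))
    rw [key, key, key, key2]
    refine ⟨by ring, rfl, ?_⟩
    rw [Nat.zero_pow (by omega)]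
  -- main case
  have hcardfun : (Finset.univ : Finset (Fin m → Fin n)).card = n ^ m := by
    simp [Finset.card_univ]
  refine ⟨?_, ?_, ?_⟩
  · -- (1) via snoc
    rw [fval_card, ← Equiv.sum_comp (Fin.snocEquiv (fun _ => Fin n))]
    rw [Fintype.sum_prod_type_right]
    have : ∀ (p : Fin n × (Fin m → Fin n)),
        edgeCond (Fin.snocEquiv (fun _ => Fin n) p) 0 σ = edgeCond p.2 0 σ := by
      rintro ⟨x, g⟩
      show edgeCond (Fin.snoc g x : Fin (m+1) → Fin n) 0 σ = _
      exact edgeCond_snoc g x σ 0 (by simpa using hlen)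
    simp only [this]
    simp only [Finset.sum_const, Finset.card_univ, Fintype.card_fin, smul_eq_mul]
    rw [← Finset.mul_sum, ← fval_card]
  · -- (2) via cons
    rw [fval_card, ← Equiv.sum_comp (Fin.consEquiv (fun _ => Fin n)), Fintype.sum_prod_type]
    have key : ∀ (x : Fin n) (g : Fin m → Fin n),
        edgeCond (Fin.consEquiv (fun _ => Fin n) (x, g)) 0 (false :: σ) =
          (decide ((x : ℕ) = 0) && edgeCond g 0 σ) := by
      intro x g
      show edgeCond (Fin.cons x g : Fin (m+1) → Fin n) 0 (false :: σ) = _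
      rw [edgeCond, vcond_cons_zero, edgeCond_tail, Fin.tail_cons]
    simp only [key]
    have inner : ∀ x : Fin n,
        (∑ g : Fin m → Fin n, if (decide ((x : ℕ) = 0) && edgeCond g 0 σ) = true then 1 else 0)
          = if x = ⟨0, hn⟩ then fval n m σ else 0 := by
      intro x
      by_cases hx : (x : ℕ) = 0
      · have hx' : x = ⟨0, hn⟩ := Fin.ext hx
        simp [hx, hx', fval, Fset]
      · have hx' : ¬ x = ⟨0, hn⟩ := fun h => hx (by rw [h])
        simp [hx, hx']
    simp only [inner]
    rw [Finset.sum_ite_eq' Finset.univ (⟨0, hn⟩ : Fin n)]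
    simp
  · -- (3) via cons
    rw [fval_card, ← Equiv.sum_comp (Fin.consEquiv (fun _ => Fin n)), Fintype.sum_prod_type]
    have key : ∀ (x : Fin n) (g : Fin m → Fin n),
        edgeCond (Fin.consEquiv (fun _ => Fin n) (x, g)) 0 (true :: σ) =
          (decide ((x : ℕ) = 0) || edgeCond g 0 σ) := by
      intro x g
      show edgeCond (Fin.cons x g : Fin (m+1) → Fin n) 0 (true :: σ) = _
      rw [edgeCond, vcond_cons_zero, edgeCond_tail, Fin.tail_cons]
    simp only [key]
    have inner : ∀ x : Fin n,
        (∑ g : Fin m → Fin n, if (decide ((x : ℕ) = 0) || edgeCond g 0 σ) = true then 1 else 0)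
          = if x = ⟨0, hn⟩ then n ^ m else fval n m σ := by
      intro x
      by_cases hx : (x : ℕ) = 0
      · have hx' : x = ⟨0, hn⟩ := Fin.ext hx
        simp [hx, hx', Finset.card_univ]
      · have hx' : ¬ x = ⟨0, hn⟩ := fun h => hx (by rw [h])
        simp [hx, hx', fval, Fset]
    simp only [inner]
    rw [Finset.sum_ite, Finset.sum_const, Finset.sum_const]
    have h1 : (Finset.univ.filter (fun x : Fin n => x = ⟨0, hn⟩)).card = 1 := by
      simp [Finset.filter_eq']
    have h2 : (Finset.univ.filter (fun x : Fin n => ¬ x = ⟨0, hn⟩)).card = n - 1 := by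
      rw [Finset.filter_not, Finset.card_sdiff_of_subset (Finset.filter_subset _ _)]
      simp [Finset.filter_eq', Finset.card_univ]
    rw [h1, h2, one_smul, smul_eq_mul]
end

section
/- For n ≥ 2, r ≥ 2 and every 0 ≤ i ≤ 2^{r−1}, N_r(i) = N_{r−1}(i); that is, the sequence (N_{r−1}(i))_{0 ≤ i ≤ 2^{r−1}} is an initial segment of (N_r(i))_{0 ≤ i ≤ 2^r}. -/
def gfun (n : ℕ) : List Bool → ℕ → ℕ
  | [], k => n ^ (k - 1)
  | false :: s, k => gfun n s (k - 1)
  | true :: s, k => n ^ (k - 1) + (n - 1) * gfun n s (k - 1)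

lemma vcond_cons {n r : ℕ} (a : Fin n) (f : Fin r → Fin n) :
    vcond (Fin.cons a f) 0 = decide ((a : ℕ) = 0) := by
  simp [vcond]

lemma vcond_cons_succ {n r : ℕ} (a : Fin n) (f : Fin r → Fin n) (j : ℕ) :
    vcond (Fin.cons a f) (j + 1) = vcond f j := by
  unfold vcond
  by_cases h : j < r
  · rw [dif_pos (by omega : j + 1 < r + 1), dif_pos h]
    have : (⟨j + 1, by omega⟩ : Fin (r+1)) = Fin.succ ⟨j, h⟩ := rfl
    rw [this, Fin.cons_succ]
  · rw [dif_neg (by omega), dif_neg h]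

lemma edgeCond_cons {n r : ℕ} (a : Fin n) (f : Fin r → Fin n) (s : List Bool) (j : ℕ) :
    edgeCond (Fin.cons a f) (j + 1) s = edgeCond f j s := by
  induction s generalizing j with
  | nil => exact vcond_cons_succ a f j
  | cons b t ih =>
    cases b <;> simp [edgeCond, vcond_cons_succ, ih]

lemma filter_fst_card {n : ℕ} (hn : 1 ≤ n) :
    (Finset.univ.filter (fun a : Fin n => (a : ℕ) = 0)).card = 1 := by
  have : (Finset.univ.filter (fun a : Fin n => (a : ℕ) = 0)) = {(⟨0, hn⟩ : Fin n)} := by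
    ext a
    simp [Fin.ext_iff]
  rw [this, Finset.card_singleton]

lemma filter_fst_ne_card {n : ℕ} (hn : 1 ≤ n) :
    (Finset.univ.filter (fun a : Fin n => ¬((a : ℕ) = 0))).card = n - 1 := by
  have h := Finset.card_filter_add_card_filter_not
    (s := (Finset.univ : Finset (Fin n))) (p := fun a => (a : ℕ) = 0)
  rw [filter_fst_card hn, Finset.card_univ, Fintype.card_fin] at h
  omega

lemma fval_step (n r : ℕ) (σ : List Bool) :
    fval n (r + 1) σ =
      (Finset.univ.filter
        (fun p : Fin n × (Fin r → Fin n) => edgeCond (Fin.cons p.1 p.2) 0 σ = true)).card := by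
  unfold fval Fset
  refine (Finset.card_equiv (Fin.consEquiv (fun _ => Fin n)) ?_).symm
  intro p
  simp [Fin.consEquiv]

lemma fval_nil (n r : ℕ) (hn : 1 ≤ n) : fval n (r + 1) [] = n ^ r := by
  rw [fval_step]
  have h1 : (Finset.univ.filter
      (fun p : Fin n × (Fin r → Fin n) => edgeCond (Fin.cons p.1 p.2) 0 [] = true))
      = Finset.univ.filter (fun p : Fin n × (Fin r → Fin n) => ((p.1 : ℕ) = 0 ∧ True)) := by
    apply Finset.filter_congr
    intro p _
    simp [edgeCond, vcond_cons]
  rw [h1, ← Finset.univ_product_univ,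
    Finset.filter_product (fun a : Fin n => (a : ℕ) = 0) (fun _ : Fin r → Fin n => True),
    Finset.card_product, filter_fst_card hn]
  simp [Fintype.card_fun]

lemma fval_false (n r : ℕ) (hn : 1 ≤ n) (s : List Bool) :
    fval n (r + 1) (false :: s) = fval n r s := by
  rw [fval_step]
  have h1 : (Finset.univ.filter
      (fun p : Fin n × (Fin r → Fin n) => edgeCond (Fin.cons p.1 p.2) 0 (false :: s) = true))
      = Finset.univ.filter
        (fun p : Fin n × (Fin r → Fin n) => ((p.1 : ℕ) = 0 ∧ edgeCond p.2 0 s = true)) := by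
    apply Finset.filter_congr
    intro p _
    simp [edgeCond, vcond_cons, edgeCond_cons]
  rw [h1, ← Finset.univ_product_univ,
    Finset.filter_product (fun a : Fin n => (a : ℕ) = 0)
      (fun f : Fin r → Fin n => edgeCond f 0 s = true),
    Finset.card_product, filter_fst_card hn, one_mul]
  rfl

lemma fval_true (n r : ℕ) (hn : 1 ≤ n) (s : List Bool) :
    fval n (r + 1) (true :: s) = n ^ r + (n - 1) * fval n r s := by
  rw [fval_step]
  have h1 : (Finset.univ.filter
      (fun p : Fin n × (Fin r → Fin n) => edgeCond (Fin.cons p.1 p.2) 0 (true :: s) = true))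
      = Finset.univ.filter
        (fun p : Fin n × (Fin r → Fin n) =>
          ((p.1 : ℕ) = 0 ∧ True) ∨ (¬((p.1 : ℕ) = 0) ∧ edgeCond p.2 0 s = true)) := by
    apply Finset.filter_congr
    intro p _
    simp [edgeCond, vcond_cons, edgeCond_cons]
    tauto
  rw [h1, Finset.filter_or]
  rw [Finset.card_union_of_disjoint]
  · rw [← Finset.univ_product_univ,
      Finset.filter_product (fun a : Fin n => (a : ℕ) = 0) (fun _ : Fin r → Fin n => True),
      Finset.filter_product (fun a : Fin n => ¬((a : ℕ) = 0))
        (fun f : Fin r → Fin n => edgeCond f 0 s = true),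
      Finset.card_product, Finset.card_product, filter_fst_card hn, filter_fst_ne_card hn]
    simp only [Finset.filter_true, Finset.card_univ, Fintype.card_fun, Fintype.card_fin, one_mul]
    rfl
  · rw [Finset.disjoint_left]
    intro p hp hp'
    simp only [Finset.mem_filter] at hp hp'
    tauto

lemma fval_eq_gfun {n : ℕ} (hn : 1 ≤ n) :
    ∀ (σ : List Bool) (r : ℕ), σ.length < r → fval n r σ = gfun n σ r := by
  intro σ
  induction σ with
  | nil =>
    intro r hr
    obtain ⟨r', rfl⟩ : ∃ r', r = r' + 1 := ⟨r - 1, by omega⟩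
    rw [fval_nil n r' hn]; simp [gfun]
  | cons b s ih =>
    intro r hr
    obtain ⟨r', rfl⟩ : ∃ r', r = r' + 1 := ⟨r - 1, by omega⟩
    have hs : s.length < r' := by simpa using Nat.lt_of_succ_lt_succ hr
    cases b
    · rw [fval_false n r' hn s, ih r' hs]; simp [gfun]
    · rw [fval_true n r' hn s, ih r' hs]; simp [gfun]

lemma gfun_pos {n : ℕ} (hn : 1 ≤ n) :
    ∀ (s : List Bool) (k : ℕ), s.length < k → 1 ≤ gfun n s k := by
  intro s
  induction s with
  | nil =>
    intro k hk
    simpa [gfun] using Nat.one_le_pow _ _ (by omega)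
  | cons b t ih =>
    intro k hk
    have ht : t.length < k - 1 := by simp at hk; omega
    cases b
    · simpa [gfun] using ih (k - 1) ht
    · simp only [gfun]
      have := Nat.one_le_pow (k - 1) n (by omega)
      omega

lemma gfun_lt {n : ℕ} (hn : 2 ≤ n) :
    ∀ (s : List Bool) (k : ℕ), s.length < k → gfun n s k < n ^ k := by
  intro s
  induction s with
  | nil =>
    intro k hk
    simp only [gfun]
    exact Nat.pow_lt_pow_right (by omega) (by omega)
  | cons b t ih =>
    intro k hk
    have ht : t.length < k - 1 := by simp at hk; omega
    have h1 := ih (k - 1) ht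
    cases b
    · simp only [gfun]
      calc gfun n t (k - 1) < n ^ (k - 1) := h1
        _ ≤ n ^ k := Nat.pow_le_pow_right (by omega) (by omega)
    · simp only [gfun]
      have h2 : n ^ (k - 1) + (n - 1) * gfun n t (k - 1)
          < n ^ (k - 1) + (n - 1) * n ^ (k - 1) := by
        have : (n - 1) * gfun n t (k - 1) < (n - 1) * n ^ (k - 1) :=
          (Nat.mul_lt_mul_left (by omega)).mpr h1
        omega
      have h3 : n ^ (k - 1) + (n - 1) * n ^ (k - 1) = n ^ k := by
        have : n ^ k = n * n ^ (k - 1) := by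
          rw [← pow_succ']
          congr 1
          omega
        rw [this]
        have hn1 : n - 1 + 1 = n := by omega
        nlinarith [Nat.one_le_pow (k-1) n (by omega : 0 < n)]
      omega

lemma gfun_inj {n : ℕ} (hn : 2 ≤ n) :
    ∀ (s t : List Bool) (k : ℕ), s.length < k → t.length < k →
      gfun n s k = gfun n t k → s = t := by
  intro s
  induction s with
  | nil =>
    intro t k hs ht h
    cases t with
    | nil => rfl
    | cons b t' =>
      exfalso
      have ht' : t'.length < k - 1 := by simp at ht; omega
      cases b
      · have := gfun_lt hn t' (k - 1) ht'
        simp only [gfun] at h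
        omega
      · have := gfun_pos (by omega : 1 ≤ n) t' (k - 1) ht'
        simp only [gfun] at h
        have h3 : 1 * 1 ≤ (n - 1) * gfun n t' (k - 1) := Nat.mul_le_mul (by omega) this
        rw [one_mul] at h3
        omega
  | cons b s' ih =>
    intro t k hs ht h
    have hs' : s'.length < k - 1 := by simp at hs; omega
    cases t with
    | nil =>
      exfalso
      cases b
      · have := gfun_lt hn s' (k - 1) hs'
        simp only [gfun] at h
        omega
      · have h1 := gfun_pos (by omega : 1 ≤ n) s' (k - 1) hs'
        simp only [gfun] at h
        have h3 : 1 * 1 ≤ (n - 1) * gfun n s' (k - 1) := Nat.mul_le_mul (by omega) h1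
        rw [one_mul] at h3
        omega
    | cons c t' =>
      have ht' : t'.length < k - 1 := by simp at ht; omega
      cases b <;> cases c
      · simp only [gfun] at h
        rw [ih t' (k - 1) hs' ht' h]
      · exfalso
        simp only [gfun] at h
        have h1 := gfun_lt hn s' (k - 1) hs'
        have h2 := gfun_pos (by omega : 1 ≤ n) t' (k - 1) ht'
        have h3 : 1 * 1 ≤ (n - 1) * gfun n t' (k - 1) := Nat.mul_le_mul (by omega) h2
        rw [one_mul] at h3
        omega
      · exfalso
        simp only [gfun] at h
        have h1 := gfun_lt hn t' (k - 1) ht'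
        have h2 := gfun_pos (by omega : 1 ≤ n) s' (k - 1) hs'
        have h3 : 1 * 1 ≤ (n - 1) * gfun n s' (k - 1) := Nat.mul_le_mul (by omega) h2
        rw [one_mul] at h3
        omega
      · simp only [gfun] at h
        have h' := Nat.add_left_cancel h
        have := Nat.eq_of_mul_eq_mul_left (show 0 < n - 1 by omega) h'
        rw [ih t' (k - 1) hs' ht' this]

lemma mem_PsiSet {r : ℕ} {σ : List Bool} : σ ∈ PsiSet r ↔ σ.length < r := by
  simp only [PsiSet, Finset.mem_biUnion, Finset.mem_range, Finset.mem_image,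
    Finset.mem_univ, true_and]
  constructor
  · rintro ⟨m, hm, f, rfl⟩
    simpa using hm
  · intro h
    exact ⟨σ.length, h, σ.get, List.ofFn_get σ⟩

lemma card_PsiSet (r : ℕ) : (PsiSet r).card = 2 ^ r - 1 := by
  unfold PsiSet
  rw [Finset.card_biUnion]
  · have h1 : ∀ m, ((Finset.univ : Finset (Fin m → Bool)).image List.ofFn).card = 2 ^ m := by
      intro m
      rw [Finset.card_image_of_injective _ List.ofFn_injective, Finset.card_univ]
      simp [Fintype.card_fun]
    calc ∑ m ∈ Finset.range r, ((Finset.univ : Finset (Fin m → Bool)).image List.ofFn).card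
        = ∑ m ∈ Finset.range r, 2 ^ m := by
          exact Finset.sum_congr rfl (fun m _ => h1 m)
      _ = 2 ^ r - 1 := by
          induction r with
          | zero => simp
          | succ r ih =>
            rw [Finset.sum_range_succ, ih]
            have := Nat.one_le_two_pow (n := r)
            omega
  · intro x _ y _ hxy
    rw [Function.onFun_apply, Finset.disjoint_left]
    rintro σ h1 h2
    simp only [Finset.mem_image, Finset.mem_univ, true_and] at h1 h2
    obtain ⟨f, rfl⟩ := h1
    obtain ⟨g, hg⟩ := h2
    apply hxy
    have := congrArg List.length hg
    simpa using this.symm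

lemma card_Nvals {n : ℕ} (hn : 2 ≤ n) {k : ℕ} (hk : 1 ≤ k) :
    (Nvals n k).card = 2 ^ k + 1 := by
  unfold Nvals
  have himg : ∀ x ∈ (PsiSet k).image (fval n k), 1 ≤ x ∧ x < n ^ k := by
    intro x hx
    simp only [Finset.mem_image] at hx
    obtain ⟨σ, hσ, rfl⟩ := hx
    rw [mem_PsiSet] at hσ
    rw [fval_eq_gfun (by omega) σ k hσ]
    exact ⟨gfun_pos (by omega) σ k hσ, gfun_lt hn σ k hσ⟩
  rw [Finset.card_insert_of_notMem, Finset.card_insert_of_notMem]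
  · rw [Finset.card_image_of_injOn, card_PsiSet]
    · have := Nat.one_le_two_pow (n := k)
      omega
    · intro σ hσ τ hτ h
      rw [Finset.mem_coe, mem_PsiSet] at hσ hτ
      rw [fval_eq_gfun (by omega) σ k hσ, fval_eq_gfun (by omega) τ k hτ] at h
      exact gfun_inj hn σ τ k hσ hτ h
  · intro hmem
    have := himg _ hmem
    omega
  · intro hmem
    simp only [Finset.mem_insert] at hmem
    rcases hmem with h | h
    · have : 1 ≤ n ^ k := Nat.one_le_pow _ _ (by omega)
      omega
    · have := himg _ h
      omega

lemma Nvals_subset {n k : ℕ} (hn : 2 ≤ n) (hk : 1 ≤ k) :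
    Nvals n k ⊆ Nvals n (k + 1) := by
  intro a ha
  simp only [Nvals, Finset.mem_insert, Finset.mem_image] at ha ⊢
  rcases ha with rfl | rfl | ⟨σ, hσ, rfl⟩
  · exact Or.inl rfl
  · refine Or.inr (Or.inr ⟨[], ?_, ?_⟩)
    · rw [mem_PsiSet]; simp
    · rw [fval_nil n k (by omega)]
  · refine Or.inr (Or.inr ⟨false :: σ, ?_, ?_⟩)
    · rw [mem_PsiSet] at hσ ⊢; simpa using hσ
    · rw [fval_false n k (by omega)]

lemma Nvals_le {n k : ℕ} (hn : 2 ≤ n) {a : ℕ} (ha : a ∈ Nvals n k) : a ≤ n ^ k := by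
  simp only [Nvals, Finset.mem_insert, Finset.mem_image] at ha
  rcases ha with rfl | rfl | ⟨σ, hσ, rfl⟩
  · exact Nat.zero_le _
  · exact le_rfl
  · rw [mem_PsiSet] at hσ
    rw [fval_eq_gfun (by omega) σ k hσ]
    exact le_of_lt (gfun_lt hn σ k hσ)

lemma Nvals_drop {n k : ℕ} (hn : 2 ≤ n) (hk : 1 ≤ k) {b : ℕ}
    (hb : b ∈ Nvals n (k + 1)) (hle : b ≤ n ^ k) : b ∈ Nvals n k := by
  simp only [Nvals, Finset.mem_insert, Finset.mem_image] at hb ⊢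
  rcases hb with rfl | rfl | ⟨σ, hσ, rfl⟩
  · exact Or.inl rfl
  · exfalso
    have : n ^ k < n ^ (k + 1) := Nat.pow_lt_pow_succ (by omega)
    omega
  · rw [mem_PsiSet] at hσ
    cases σ with
    | nil =>
      refine Or.inr (Or.inl ?_)
      rw [fval_nil n k (by omega)]
    | cons b' s =>
      have hs : s.length < k := by simpa using hσ
      cases b'
      · refine Or.inr (Or.inr ⟨s, ?_, ?_⟩)
        · rw [mem_PsiSet]; exact hs
        · rw [fval_false n k (by omega)]
      · exfalso
        rw [fval_true n k (by omega)] at hle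
        have h1 : 1 ≤ fval n k s := by
          rw [fval_eq_gfun (by omega : 1 ≤ n) s k hs]
          exact gfun_pos (by omega) s k hs
        have h3 : 1 * 1 ≤ (n - 1) * fval n k s := Nat.mul_le_mul (by omega) h1
        omega

theorem stmt3 (n r i : ℕ) (hn : 2 ≤ n) (hr : 2 ≤ r) (hi : i ≤ 2 ^ (r - 1)) :
    Nseq n r i = Nseq n (r - 1) i := by
  obtain ⟨k, rfl⟩ : ∃ k, r = k + 1 := ⟨r - 1, by omega⟩
  have hk : 1 ≤ k := by omega
  simp only [Nat.add_sub_cancel] at hi ⊢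
  have hsub := Nvals_subset hn hk (n := n)
  have key : Finset.sort (Nvals n (k + 1)) (· ≤ ·) =
      Finset.sort (Nvals n k) (· ≤ ·) ++
        Finset.sort (Nvals n (k + 1) \ Nvals n k) (· ≤ ·) := by
    apply List.Perm.eq_of_pairwise' (Finset.pairwise_sort _ _) ?_ ?_
    · rw [List.pairwise_append]
      refine ⟨Finset.pairwise_sort _ _, Finset.pairwise_sort _ _, ?_⟩
      intro a ha b hb
      rw [Finset.mem_sort] at ha hb
      rw [Finset.mem_sdiff] at hb
      have h1 : a ≤ n ^ k := Nvals_le hn ha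
      have h2 : ¬ b ≤ n ^ k := fun hble => hb.2 (Nvals_drop hn hk hb.1 hble)
      omega
    · rw [← Multiset.coe_eq_coe, ← Multiset.coe_add, Finset.sort_eq, Finset.sort_eq,
        Finset.sort_eq, Finset.sdiff_val]
      exact (add_tsub_cancel_of_le (Finset.val_le_iff.mpr hsub)).symm
  have hlen : (Finset.sort (Nvals n k) (· ≤ ·)).length = 2 ^ k + 1 := by
    rw [Finset.length_sort, card_Nvals hn hk]
  unfold Nseq
  rw [key, List.getD_append _ _ _ _ (by omega)]
end

section
/- For every σ ∈ Σ_r, B(F_r(σ)) = F_r(σ̄), where σ̄ is obtained from σ ∈ Ψ_r by replacing every ∧ by ∨ and every ∨ by ∧, and ᾱ = ω, ω̄ = α. -/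
/-- The blocker `B(F)`: edges of `[n]^r` meeting every edge of `F`. -/
def blocker (n r : ℕ) (F : Finset (Fin r → Fin n)) : Finset (Fin r → Fin n) :=
  Finset.univ.filter (fun e => ∀ f ∈ F, ∃ i, e i = f i)

/-- The index set `Σ_r = Ψ_r ∪ {α, ω}` (elements of `Ψ_r` are sequences over
`{∧, ∨}`, with `false` encoding `∧` and `true` encoding `∨`). -/
inductive Sig where
  | alpha : Sig
  | seq (σ : List Bool) : Sig
  | omega : Sig

/-- Membership in `Σ_r`: a sequence must have length at most `r - 1`. -/
def Sig.valid (r : ℕ) : Sig → Prop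
  | .seq σ => σ.length < r
  | _ => True

/-- `F_r(σ)` for `σ ∈ Σ_r`, with `F_r(α) = ∅` and `F_r(ω) = [n]^r`. -/
def Sig.Fbig (n r : ℕ) : Sig → Finset (Fin r → Fin n)
  | .alpha => ∅
  | .seq σ => Fset n r σ
  | .omega => Finset.univ

/-- `σ̄`: interchange `∧` and `∨`; `ᾱ = ω` and `ω̄ = α`. -/
def Sig.bar : Sig → Sig
  | .alpha => .omega
  | .seq σ => .seq (σ.map not)
  | .omega => .alpha

/-- A value of `Fin n` different from `x` (exists since `n ≥ 2`). -/
def other {n : ℕ} (hn : 2 ≤ n) (x : Fin n) : Fin n :=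
  if (x : ℕ) = 0 then ⟨1, by omega⟩ else ⟨0, by omega⟩

lemma other_ne {n : ℕ} (hn : 2 ≤ n) (x : Fin n) : other hn x ≠ x := by
  unfold other
  split <;> (intro h; apply_fun (Fin.val) at h; simp at h; omega)

lemma vcond_congr {n r : ℕ} {e e' : Fin r → Fin n} (j : ℕ)
    (h : ∀ i : Fin r, j ≤ (i : ℕ) → e i = e' i) : vcond e j = vcond e' j := by
  unfold vcond
  split
  · next hj => rw [h ⟨j, hj⟩ (le_refl j)]
  · rfl

lemma edgeCond_congr {n r : ℕ} {e e' : Fin r → Fin n} :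
    ∀ (s : List Bool) (j : ℕ), (∀ i : Fin r, j ≤ (i : ℕ) → e i = e' i) →
    edgeCond e j s = edgeCond e' j s := by
  intro s
  induction s with
  | nil => intro j h; exact vcond_congr j h
  | cons b t ih =>
    intro j h
    have h' : ∀ i : Fin r, j + 1 ≤ (i : ℕ) → e i = e' i := fun i hi => h i (by omega)
    cases b <;> simp only [edgeCond, vcond_congr j h, ih (j + 1) h']

lemma vcond_true_iff {n r : ℕ} (e : Fin r → Fin n) (j : ℕ) (hj : j < r) :
    vcond e j = true ↔ (e ⟨j, hj⟩ : ℕ) = 0 := by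
  simp [vcond, hj]

lemma key {n r : ℕ} (hn : 2 ≤ n) (e : Fin r → Fin n) :
    ∀ (s : List Bool) (j : ℕ), j + s.length < r →
    (edgeCond e j (s.map not) = true ↔
      ∀ f : Fin r → Fin n, edgeCond f j s = true → ∃ i : Fin r, j ≤ (i : ℕ) ∧ e i = f i) := by
  intro s
  induction s with
  | nil =>
    intro j hjr
    simp only [List.length_nil, Nat.add_zero] at hjr
    simp only [List.map_nil]
    rw [show edgeCond e j ([] : List Bool) = vcond e j from rfl, vcond_true_iff e j hjr]
    constructor
    · intro he f hf
      rw [show edgeCond f j ([] : List Bool) = vcond f j from rfl, vcond_true_iff f j hjr] at hf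
      exact ⟨⟨j, hjr⟩, le_refl j, Fin.ext (by omega)⟩
    · intro hb
      -- consider f which is 0 at j and differs from e elsewhere
      set f : Fin r → Fin n := fun i => if (i : ℕ) = j then ⟨0, by omega⟩ else other hn (e i) with hf
      have hcf : edgeCond f j ([] : List Bool) = true := by
        rw [show edgeCond f j ([] : List Bool) = vcond f j from rfl, vcond_true_iff f j hjr]
        simp [hf]
      obtain ⟨i, hji, hei⟩ := hb f hcf
      by_cases hij : (i : ℕ) = j
      · have : e ⟨j, hjr⟩ = e i := by congr 1; exact Fin.ext hij.symm
        rw [this, hei]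
        simp [hf, hij]
      · exfalso
        rw [hf] at hei
        simp only [hij, if_false] at hei
        exact other_ne hn (e i) hei.symm
  | cons b t ih =>
    intro j hjr
    simp only [List.length_cons] at hjr
    have hjr' : j < r := by omega
    have ht : (j + 1) + t.length < r := by omega
    have IH := ih (j + 1) ht
    cases b
    · -- b = false (∧); bar head is true (∨)
      simp only [List.map_cons, Bool.not_false]
      rw [show edgeCond e j (true :: t.map not) = (vcond e j || edgeCond e (j+1) (t.map not))
        from rfl]
      constructor
      · intro he f hf
        rw [show edgeCond f j (false :: t) = (vcond f j && edgeCond f (j+1) t) from rfl,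
          Bool.and_eq_true] at hf
        rcases Bool.or_eq_true _ _ |>.mp he with h1 | h2
        · refine ⟨⟨j, hjr'⟩, le_refl j, Fin.ext ?_⟩
          rw [vcond_true_iff e j hjr'] at h1
          rw [vcond_true_iff f j hjr'] at hf
          omega
        · obtain ⟨i, hji, hei⟩ := (IH.mp h2) f hf.2
          exact ⟨i, by omega, hei⟩
      · intro hb
        rw [Bool.or_eq_true]
        by_cases h1 : vcond e j = true
        · exact Or.inl h1
        right
        apply IH.mpr
        intro f hf
        -- modify f at coordinate j to be 0
        set f' : Fin r → Fin n := fun i => if (i : ℕ) = j then ⟨0, by omega⟩ else f i with hf'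
        have hagree : ∀ i : Fin r, j + 1 ≤ (i : ℕ) → f' i = f i := by
          intro i hi; simp [hf', show (i:ℕ) ≠ j by omega]
        have hcf' : edgeCond f' j (false :: t) = true := by
          rw [show edgeCond f' j (false :: t) = (vcond f' j && edgeCond f' (j+1) t) from rfl,
            Bool.and_eq_true]
          constructor
          · rw [vcond_true_iff f' j hjr']; simp [hf']
          · rw [edgeCond_congr t (j+1) hagree]; exact hf
        obtain ⟨i, hji, hei⟩ := hb f' hcf'
        by_cases hij : (i : ℕ) = j
        · exfalso
          apply h1
          rw [vcond_true_iff e j hjr']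
          have : e i = f' i := hei
          rw [hf'] at this
          simp only [hij, if_pos] at this
          have : (e i : ℕ) = 0 := by rw [this]
          have he : e ⟨j, hjr'⟩ = e i := by congr 1; exact Fin.ext hij.symm
          rw [he]; exact this
        · exact ⟨i, by omega, by rw [hei, hagree i (by omega)]⟩
    · -- b = true (∨); bar head is false (∧)
      simp only [List.map_cons, Bool.not_true]
      rw [show edgeCond e j (false :: t.map not) = (vcond e j && edgeCond e (j+1) (t.map not))
        from rfl, Bool.and_eq_true]
      constructor
      · intro ⟨h1, h2⟩ f hf
        rw [show edgeCond f j (true :: t) = (vcond f j || edgeCond f (j+1) t) from rfl,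
          Bool.or_eq_true] at hf
        rcases hf with hf | hf
        · refine ⟨⟨j, hjr'⟩, le_refl j, Fin.ext ?_⟩
          rw [vcond_true_iff e j hjr'] at h1
          rw [vcond_true_iff f j hjr'] at hf
          omega
        · obtain ⟨i, hji, hei⟩ := (IH.mp h2) f hf
          exact ⟨i, by omega, hei⟩
      · intro hb
        constructor
        · -- show e j = 0
          rw [vcond_true_iff e j hjr']
          set f : Fin r → Fin n := fun i => if (i : ℕ) = j then ⟨0, by omega⟩
            else other hn (e i) with hf
          have hcf : edgeCond f j (true :: t) = true := by
            rw [show edgeCond f j (true :: t) = (vcond f j || edgeCond f (j+1) t) from rfl,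
              Bool.or_eq_true]
            left
            rw [vcond_true_iff f j hjr']; simp [hf]
          obtain ⟨i, hji, hei⟩ := hb f hcf
          by_cases hij : (i : ℕ) = j
          · have he : e ⟨j, hjr'⟩ = e i := by congr 1; exact Fin.ext hij.symm
            rw [he, hei, hf]
            simp [hij]
          · exfalso
            rw [hf] at hei
            simp only [hij, if_false] at hei
            exact other_ne hn (e i) hei.symm
        · apply IH.mpr
          intro f hf
          set f' : Fin r → Fin n := fun i => if (i : ℕ) = j then other hn (e i) else f i with hf'
          have hagree : ∀ i : Fin r, j + 1 ≤ (i : ℕ) → f' i = f i := by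
            intro i hi; simp [hf', show (i:ℕ) ≠ j by omega]
          have hcf' : edgeCond f' j (true :: t) = true := by
            rw [show edgeCond f' j (true :: t) = (vcond f' j || edgeCond f' (j+1) t) from rfl,
              Bool.or_eq_true]
            right
            rw [edgeCond_congr t (j+1) hagree]; exact hf
          obtain ⟨i, hji, hei⟩ := hb f' hcf'
          by_cases hij : (i : ℕ) = j
          · exfalso
            rw [hf'] at hei
            simp only [hij, if_pos] at hei
            exact other_ne hn (e i) hei.symm
          · exact ⟨i, by omega, by rw [hei, hagree i (by omega)]⟩

theorem stmt6 (n r : ℕ) (hn : 2 ≤ n) (σ : Sig) (hσ : σ.valid r) :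
    blocker n r (σ.Fbig n r) = (σ.bar.Fbig n r) := by
  cases σ with
  | alpha =>
    simp [Sig.Fbig, Sig.bar, blocker]
  | omega =>
    simp only [Sig.Fbig, Sig.bar, blocker]
    ext e
    simp only [Finset.mem_filter, Finset.mem_univ, true_and, Finset.notMem_empty,
      iff_false]
    intro h
    obtain ⟨i, hi⟩ := h (fun i => other hn (e i)) trivial
    exact other_ne hn (e i) hi.symm
  | seq s =>
    have hσ' : s.length < r := hσ
    simp only [Sig.Fbig, Sig.bar]
    ext e
    simp only [blocker, Fset, Finset.mem_filter, Finset.mem_univ, true_and]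
    rw [key hn e s 0 (by omega)]
    constructor
    · intro h f hf
      obtain ⟨i, hi⟩ := h f hf
      exact ⟨i, by omega, hi⟩
    · intro h f hf
      obtain ⟨i, _, hi⟩ := h f hf
      exact ⟨i, hi⟩
end

section
/- If F_1, F_2 ⊆ [n]^r satisfy |F_1| > n^{r−1} and |F_2| ≥ n^{r−1}, then there exist e_1 ∈ F_1 and e_2 ∈ F_2 that are disjoint. -/
open Finset Real

namespace Stmt10Aux

variable {n r : ℕ}

noncomputable def qq (n : ℕ) (a b : Fin n) : ℝ := (if a = b then 1 else 0) - 1 / n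

noncomputable def pm (S : Finset (Fin r)) (e f : Fin r → Fin n) : ℝ :=
  ∏ i, if i ∈ S then (1 / n : ℝ) else qq n (e i) (f i)

lemma qq_symm (a b : Fin n) : qq n a b = qq n b a := by
  simp [qq, eq_comm]

lemma pm_symm (S : Finset (Fin r)) (e f : Fin r → Fin n) : pm S e f = pm S f e := by
  unfold pm
  exact Finset.prod_congr rfl fun i _ => by by_cases hi : i ∈ S <;> simp [hi, qq_symm]

lemma qq_idem (hn : 0 < n) (a b : Fin n) :
    ∑ y : Fin n, qq n a y * qq n y b = qq n a b := by
  have hn0 : (n : ℝ) ≠ 0 := Nat.cast_ne_zero.2 hn.ne'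
  have h : ∀ y : Fin n, qq n a y * qq n y b =
      (if a = y then (1:ℝ) else 0) * (if y = b then (1:ℝ) else 0)
      - (1/n) * (if a = y then (1:ℝ) else 0) - (1/n) * (if y = b then (1:ℝ) else 0)
      + 1/n * (1/n) := by
    intro y; unfold qq; ring
  rw [Finset.sum_congr rfl fun y _ => h y]
  simp only [Finset.sum_add_distrib, Finset.sum_sub_distrib, ← Finset.mul_sum]
  have h1 : ∑ y : Fin n, (if a = y then (1:ℝ) else 0) * (if y = b then (1:ℝ) else 0)
      = (if a = b then (1:ℝ) else 0) := by
    rw [Finset.sum_eq_single a]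
    · simp
    · intro y _ hy; simp [Ne.symm hy]
    · simp
  have h2 : ∑ y : Fin n, (if a = y then (1:ℝ) else 0) = 1 := by simp
  have h3 : ∑ y : Fin n, (if y = b then (1:ℝ) else 0) = 1 := by simp
  rw [h1, h2, h3]
  simp only [Finset.sum_const, Finset.card_univ, Fintype.card_fin, nsmul_eq_mul]
  unfold qq
  field_simp
  ring

lemma pm_idem (hn : 0 < n) (S : Finset (Fin r)) (e f : Fin r → Fin n) :
    ∑ x : Fin r → Fin n, pm S e x * pm S x f = pm S e f := by
  have hn0 : (n : ℝ) ≠ 0 := Nat.cast_ne_zero.2 hn.ne'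
  have h : ∀ x : Fin r → Fin n, pm S e x * pm S x f =
      ∏ i, ((if i ∈ S then (1/n : ℝ) else qq n (e i) (x i)) *
        (if i ∈ S then (1/n : ℝ) else qq n (x i) (f i))) := by
    intro x; rw [Finset.prod_mul_distrib]; rfl
  rw [Finset.sum_congr rfl fun x _ => h x,
    ← Fintype.prod_sum (fun i (y : Fin n) => (if i ∈ S then (1/n : ℝ) else qq n (e i) y) *
      (if i ∈ S then (1/n : ℝ) else qq n y (f i)))]
  exact Finset.prod_congr rfl fun i _ => by
    by_cases hi : i ∈ S
    · simp only [hi, if_true, Finset.sum_const, Finset.card_univ, Fintype.card_fin,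
        nsmul_eq_mul]
      field_simp
    · simp only [hi, if_false]
      exact qq_idem hn _ _


noncomputable def csign (n : ℕ) {r : ℕ} (S : Finset (Fin r)) : ℝ :=
  ((n : ℝ) - 1) ^ S.card * (-1) ^ (Sᶜ).card

lemma pm_eq (S : Finset (Fin r)) (e f : Fin r → Fin n) :
    pm S e f = (1/n : ℝ) ^ S.card * ∏ i ∈ Sᶜ, qq n (e i) (f i) := by
  unfold pm
  rw [← Finset.prod_mul_prod_compl S]
  congr 1
  · rw [Finset.prod_congr rfl (fun i hi => if_pos hi), Finset.prod_const]
  · exact Finset.prod_congr rfl fun i hi => if_neg (Finset.mem_compl.1 hi)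

lemma decomp (hn : 0 < n) (e f : Fin r → Fin n) :
    (∏ i, if e i = f i then (0:ℝ) else 1) =
      ∑ S : Finset (Fin r), csign n S * pm S e f := by
  have hn0 : (n : ℝ) ≠ 0 := Nat.cast_ne_zero.2 hn.ne'
  have hfac : ∀ i, (if e i = f i then (0:ℝ) else 1) =
      (((n:ℝ) - 1) * (1/n)) + (-(qq n (e i) (f i))) := by
    intro i; unfold qq; split <;> field_simp <;> ring
  rw [Finset.prod_congr rfl fun i _ => hfac i, Fintype.prod_add]
  refine Finset.sum_congr rfl fun S _ => ?_
  rw [pm_eq, csign, Finset.prod_const, Finset.prod_congr rfl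
    (fun i (_ : i ∈ Sᶜ) => (neg_one_mul (qq n (e i) (f i))).symm), Finset.prod_mul_distrib,
    Finset.prod_const]
  rw [mul_pow]
  ring

lemma sum_pm (hn : 0 < n) (e f : Fin r → Fin n) :
    ∑ S : Finset (Fin r), pm S e f = (if e = f then (1:ℝ) else 0) := by
  have hn0 : (n : ℝ) ≠ 0 := Nat.cast_ne_zero.2 hn.ne'
  have hfac : ∀ i, (if e i = f i then (1:ℝ) else 0) = (1/n : ℝ) + qq n (e i) (f i) := by
    intro i; unfold qq; ring
  have : ∑ S : Finset (Fin r), pm S e f = ∏ i, ((1/n : ℝ) + qq n (e i) (f i)) := by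
    rw [Fintype.prod_add]
    exact Finset.sum_congr rfl fun S _ => by rw [pm_eq, Finset.prod_const]
  rw [this, ← Finset.prod_congr rfl fun i _ => hfac i, Finset.prod_boole]
  simp [funext_iff]


lemma abs_sum_mul_le {ι : Type*} [Fintype ι] (f g : ι → ℝ) :
    |∑ x, f x * g x| ≤ √(∑ x, f x ^ 2) * √(∑ x, g x ^ 2) := by
  rcases abs_cases (∑ x, f x * g x) with ⟨h, _⟩ | ⟨h, _⟩
  · rw [h]; exact Real.sum_mul_le_sqrt_mul_sqrt _ _ _
  · rw [h]
    have h2 := Real.sum_mul_le_sqrt_mul_sqrt Finset.univ (fun x => -f x) g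
    simp only [neg_mul, Finset.sum_neg_distrib, neg_sq] at h2
    exact h2

noncomputable def Bq (A B : Finset (Fin r → Fin n)) (S : Finset (Fin r)) : ℝ :=
  ∑ e ∈ A, ∑ f ∈ B, pm S e f

noncomputable def phi (A : Finset (Fin r → Fin n)) (S : Finset (Fin r))
    (x : Fin r → Fin n) : ℝ := ∑ e ∈ A, pm S e x

lemma Bq_eq (hn : 0 < n) (A B : Finset (Fin r → Fin n)) (S : Finset (Fin r)) :
    Bq A B S = ∑ x : Fin r → Fin n, phi A S x * phi B S x := by
  unfold Bq phi
  have h : ∀ x : Fin r → Fin n, (∑ e ∈ A, pm S e x) * (∑ f ∈ B, pm S f x)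
      = ∑ e ∈ A, ∑ f ∈ B, pm S e x * pm S x f := by
    intro x
    rw [Finset.sum_mul_sum]
    exact Finset.sum_congr rfl fun e _ => Finset.sum_congr rfl fun f _ => by
      rw [pm_symm S f x]
  calc ∑ e ∈ A, ∑ f ∈ B, pm S e f
      = ∑ e ∈ A, ∑ f ∈ B, ∑ x : Fin r → Fin n, pm S e x * pm S x f :=
        Finset.sum_congr rfl fun e _ => Finset.sum_congr rfl fun f _ =>
          (pm_idem hn S e f).symm
    _ = ∑ e ∈ A, ∑ x : Fin r → Fin n, ∑ f ∈ B, pm S e x * pm S x f :=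
        Finset.sum_congr rfl fun e _ => Finset.sum_comm
    _ = ∑ x : Fin r → Fin n, ∑ e ∈ A, ∑ f ∈ B, pm S e x * pm S x f := Finset.sum_comm
    _ = ∑ x : Fin r → Fin n, (∑ e ∈ A, pm S e x) * ∑ f ∈ B, pm S f x :=
        Finset.sum_congr rfl fun x _ => (h x).symm

lemma Bq_self_nonneg (hn : 0 < n) (A : Finset (Fin r → Fin n)) (S : Finset (Fin r)) :
    0 ≤ Bq A A S := by
  rw [Bq_eq hn]
  exact Finset.sum_nonneg fun x _ => mul_self_nonneg _

lemma Bq_abs_le (hn : 0 < n) (A B : Finset (Fin r → Fin n)) (S : Finset (Fin r)) :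
    |Bq A B S| ≤ √(Bq A A S) * √(Bq B B S) := by
  rw [Bq_eq hn, Bq_eq hn, Bq_eq hn]
  have := abs_sum_mul_le (phi A S) (phi B S)
  simpa [sq] using this


lemma Bq_univ (A B : Finset (Fin r → Fin n)) :
    Bq A B Finset.univ = (A.card : ℝ) * B.card * (1/n : ℝ) ^ r := by
  unfold Bq
  have hpm : ∀ e f : Fin r → Fin n, pm Finset.univ e f = (1/n : ℝ) ^ r := by
    intro e f; unfold pm
    simp [Finset.prod_const]
  simp only [Finset.sum_congr rfl fun e (_ : e ∈ A) => Finset.sum_congr rfl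
    fun f (_ : f ∈ B) => hpm e f, Finset.sum_const, nsmul_eq_mul]
  ring

lemma sum_Bq (hn : 0 < n) (A : Finset (Fin r → Fin n)) :
    ∑ S : Finset (Fin r), Bq A A S = (A.card : ℝ) := by
  unfold Bq
  rw [Finset.sum_comm]
  have h1 : ∀ e ∈ A, ∑ S : Finset (Fin r), ∑ f ∈ A, pm S e f = 1 := by
    intro e he
    rw [Finset.sum_comm]
    have h2 : ∀ f ∈ A, ∑ S : Finset (Fin r), pm S e f = (if e = f then (1:ℝ) else 0) :=
      fun f _ => sum_pm hn e f
    rw [Finset.sum_congr rfl h2, Finset.sum_ite_eq A e (fun _ => (1:ℝ)), if_pos he]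
  rw [Finset.sum_congr rfl h1, Finset.sum_const, nsmul_eq_mul, mul_one]

lemma cross_zero (hn : 0 < n) (A B : Finset (Fin r → Fin n))
    (hcross : ∀ e₁ ∈ A, ∀ e₂ ∈ B, ∃ i, e₁ i = e₂ i) :
    ∑ S : Finset (Fin r), csign n S * Bq A B S = 0 := by
  unfold Bq
  have key : ∀ e ∈ A, ∀ f ∈ B, ∑ S : Finset (Fin r), csign n S * pm S e f = 0 := by
    intro e he f hf
    rw [← decomp hn e f]
    obtain ⟨i, hi⟩ := hcross e he f hf
    exact Finset.prod_eq_zero (Finset.mem_univ i) (if_pos hi)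
  calc ∑ S : Finset (Fin r), csign n S * ∑ e ∈ A, ∑ f ∈ B, pm S e f
      = ∑ S : Finset (Fin r), ∑ e ∈ A, ∑ f ∈ B, csign n S * pm S e f := by
        refine Finset.sum_congr rfl fun S _ => ?_
        rw [Finset.mul_sum]
        exact Finset.sum_congr rfl fun e _ => Finset.mul_sum _ _ _
    _ = ∑ e ∈ A, ∑ S : Finset (Fin r), ∑ f ∈ B, csign n S * pm S e f := Finset.sum_comm
    _ = ∑ e ∈ A, ∑ f ∈ B, ∑ S : Finset (Fin r), csign n S * pm S e f :=
        Finset.sum_congr rfl fun e _ => Finset.sum_comm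
    _ = 0 := by
        rw [Finset.sum_congr rfl fun e he => Finset.sum_congr rfl fun f hf => key e he f hf]
        simp


lemma key (hn : 2 ≤ n) (hr : 1 ≤ r) (A B : Finset (Fin r → Fin n))
    (hcross : ∀ e₁ ∈ A, ∀ e₂ ∈ B, ∃ i, e₁ i = e₂ i) :
    ((n:ℝ) - 1) ^ 2 * ((A.card : ℝ) * B.card) ^ 2 ≤
      ((A.card : ℝ) * ((n:ℝ) ^ r - A.card)) * ((B.card : ℝ) * ((n:ℝ) ^ r - B.card)) := by
  have hn0 : 0 < n := lt_of_lt_of_le two_pos hn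
  have hn2 : (2:ℝ) ≤ (n:ℝ) := by exact_mod_cast hn
  have hn1 : (1:ℝ) ≤ (n:ℝ) - 1 := by linarith
  set a : ℝ := (A.card : ℝ) with ha
  set b : ℝ := (B.card : ℝ) with hb
  set N : ℝ := (n:ℝ) ^ r with hN
  have hNpos : 0 < N := by positivity
  have hNinv : N * (1/n : ℝ) ^ r = 1 := by
    rw [hN, ← mul_pow]
    have : (n:ℝ) * (1/n) = 1 := by field_simp
    rw [this, one_pow]
  -- the erased sum
  set T : Finset (Finset (Fin r)) :=
    (Finset.univ : Finset (Finset (Fin r))).erase Finset.univ with hT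
  have hsplit : csign n (Finset.univ : Finset (Fin r)) * Bq A B Finset.univ
      + ∑ S ∈ T, csign n S * Bq A B S = 0 := by
    have h := cross_zero hn0 A B hcross
    rw [← Finset.add_sum_erase _ (fun S => csign n S * Bq A B S)
      (Finset.mem_univ (Finset.univ : Finset (Fin r)))] at h
    rw [hT]
    exact h
  have hcu : csign n (Finset.univ : Finset (Fin r)) = ((n:ℝ) - 1) ^ r := by
    simp [csign]
  -- bound |csign S| for S ∈ T
  have hcs : ∀ S ∈ T, |csign n S| ≤ ((n:ℝ) - 1) ^ (r - 1) := by
    intro S hS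
    have hSne : S ≠ Finset.univ := (Finset.mem_erase.1 hS).1
    have hcard : S.card < r := by
      have h := Finset.card_lt_card (lt_of_le_of_ne (Finset.subset_univ S) hSne)
      simpa using h
    have hle : S.card ≤ r - 1 := Nat.le_sub_one_of_lt hcard
    have : |csign n S| = ((n:ℝ) - 1) ^ S.card := by
      rw [csign, abs_mul, abs_pow, abs_pow, abs_neg, abs_one, one_pow, mul_one,
        abs_of_nonneg (by linarith : (0:ℝ) ≤ (n:ℝ) - 1)]
    rw [this]
    exact pow_le_pow_right₀ hn1 hle
  -- Parseval on the erased sums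
  have hsumA : ∑ S ∈ T, Bq A A S = a - a * a * (1/n : ℝ) ^ r := by
    rw [hT, Finset.sum_erase_eq_sub (Finset.mem_univ _), sum_Bq hn0, Bq_univ]
  have hsumB : ∑ S ∈ T, Bq B B S = b - b * b * (1/n : ℝ) ^ r := by
    rw [hT, Finset.sum_erase_eq_sub (Finset.mem_univ _), sum_Bq hn0, Bq_univ]
  have huA : 0 ≤ a - a * a * (1/n : ℝ) ^ r := by
    rw [← hsumA]; exact Finset.sum_nonneg fun S _ => Bq_self_nonneg hn0 A S
  have huB : 0 ≤ b - b * b * (1/n : ℝ) ^ r := by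
    rw [← hsumB]; exact Finset.sum_nonneg fun S _ => Bq_self_nonneg hn0 B S
  -- main chain
  have h1 : ((n:ℝ) - 1) ^ r * (a * b * (1/n : ℝ) ^ r) ≤
      ((n:ℝ) - 1) ^ (r - 1) *
        (√(a - a * a * (1/n : ℝ) ^ r) * √(b - b * b * (1/n : ℝ) ^ r)) := by
    have e1 : ((n:ℝ) - 1) ^ r * (a * b * (1/n : ℝ) ^ r)
        = -(∑ S ∈ T, csign n S * Bq A B S) := by
      rw [← hcu, ← Bq_univ A B]; linarith [hsplit]
    rw [e1]
    calc -(∑ S ∈ T, csign n S * Bq A B S) ≤ |∑ S ∈ T, csign n S * Bq A B S| :=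
          neg_le_abs _
      _ ≤ ∑ S ∈ T, |csign n S * Bq A B S| := Finset.abs_sum_le_sum_abs _ _
      _ ≤ ∑ S ∈ T, ((n:ℝ) - 1) ^ (r - 1) * (√(Bq A A S) * √(Bq B B S)) := by
          refine Finset.sum_le_sum fun S hS => ?_
          rw [abs_mul]
          exact mul_le_mul (hcs S hS) (Bq_abs_le hn0 A B S) (abs_nonneg _)
            (by positivity)
      _ = ((n:ℝ) - 1) ^ (r - 1) * ∑ S ∈ T, √(Bq A A S) * √(Bq B B S) := by
          rw [Finset.mul_sum]
      _ ≤ ((n:ℝ) - 1) ^ (r - 1) *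
          (√(∑ S ∈ T, Bq A A S) * √(∑ S ∈ T, Bq B B S)) := by
          refine mul_le_mul_of_nonneg_left ?_ (by positivity)
          exact Real.sum_sqrt_mul_sqrt_le T (fun S => Bq_self_nonneg hn0 A S)
            (fun S => Bq_self_nonneg hn0 B S)
      _ = _ := by rw [hsumA, hsumB]
  -- divide both sides by (n-1)^(r-1)
  have h2 : ((n:ℝ) - 1) * (a * b * (1/n : ℝ) ^ r) ≤
      √(a - a * a * (1/n : ℝ) ^ r) * √(b - b * b * (1/n : ℝ) ^ r) := by
    have hPpos : (0:ℝ) < ((n:ℝ) - 1) ^ (r - 1) := by positivity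
    refine le_of_mul_le_mul_left ?_ hPpos
    calc ((n:ℝ) - 1) ^ (r - 1) * (((n:ℝ) - 1) * (a * b * (1/n : ℝ) ^ r))
        = ((n:ℝ) - 1) ^ r * (a * b * (1/n : ℝ) ^ r) := by
          rw [← mul_assoc, ← pow_succ, Nat.sub_add_cancel hr]
      _ ≤ _ := h1
  -- multiply both sides by N
  have h3 : ((n:ℝ) - 1) * (a * b) ≤ √(a * (N - a)) * √(b * (N - b)) := by
    have := mul_le_mul_of_nonneg_left h2 hNpos.le
    calc ((n:ℝ) - 1) * (a * b)
        = N * (((n:ℝ) - 1) * (a * b * (1/n : ℝ) ^ r)) := by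
          rw [show N * (((n:ℝ) - 1) * (a * b * (1/n : ℝ) ^ r))
            = (((n:ℝ) - 1) * (a * b)) * (N * (1/n : ℝ) ^ r) by ring, hNinv, mul_one]
      _ ≤ N * (√(a - a * a * (1/n : ℝ) ^ r) * √(b - b * b * (1/n : ℝ) ^ r)) := this
      _ = (√N * √(a - a * a * (1/n : ℝ) ^ r)) * (√N * √(b - b * b * (1/n : ℝ) ^ r)) := by
          rw [show (√N * √(a - a * a * (1/n : ℝ) ^ r)) * (√N * √(b - b * b * (1/n : ℝ) ^ r))
            = (√N * √N) * (√(a - a * a * (1/n : ℝ) ^ r) * √(b - b * b * (1/n : ℝ) ^ r))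
            by ring, Real.mul_self_sqrt hNpos.le]
      _ = √(N * (a - a * a * (1/n : ℝ) ^ r)) * √(N * (b - b * b * (1/n : ℝ) ^ r)) := by
          rw [Real.sqrt_mul hNpos.le, Real.sqrt_mul hNpos.le]
      _ = √(a * (N - a)) * √(b * (N - b)) := by
          congr 2
          · rw [show N * (a - a * a * (1/n : ℝ) ^ r)
              = N * a - a * a * (N * (1/n : ℝ) ^ r) by ring, hNinv]; ring
          · rw [show N * (b - b * b * (1/n : ℝ) ^ r)
              = N * b - b * b * (N * (1/n : ℝ) ^ r) by ring, hNinv]; ring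
  -- square
  have hA0 : 0 ≤ a * (N - a) := by
    have := mul_le_mul_of_nonneg_left huA hNpos.le
    calc (0:ℝ) ≤ N * (a - a * a * (1/n : ℝ) ^ r) := by linarith [this]
      _ = a * (N - a) := by
        rw [show N * (a - a * a * (1/n : ℝ) ^ r)
          = N * a - a * a * (N * (1/n : ℝ) ^ r) by ring, hNinv]; ring
  have hB0 : 0 ≤ b * (N - b) := by
    have := mul_le_mul_of_nonneg_left huB hNpos.le
    calc (0:ℝ) ≤ N * (b - b * b * (1/n : ℝ) ^ r) := by linarith [this]
      _ = b * (N - b) := by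
        rw [show N * (b - b * b * (1/n : ℝ) ^ r)
          = N * b - b * b * (N * (1/n : ℝ) ^ r) by ring, hNinv]; ring
  have hL0 : 0 ≤ ((n:ℝ) - 1) * (a * b) := by
    have ha0 : (0:ℝ) ≤ a := by rw [ha]; positivity
    have hb0 : (0:ℝ) ≤ b := by rw [hb]; positivity
    have : (0:ℝ) ≤ (n:ℝ) - 1 := by linarith
    positivity
  have h4 := pow_le_pow_left₀ hL0 h3 2
  calc ((n:ℝ) - 1) ^ 2 * (a * b) ^ 2 = (((n:ℝ) - 1) * (a * b)) ^ 2 := by ring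
    _ ≤ (√(a * (N - a)) * √(b * (N - b))) ^ 2 := h4
    _ = (a * (N - a)) * (b * (N - b)) := by
        rw [mul_pow, Real.sq_sqrt hA0, Real.sq_sqrt hB0]


end Stmt10Aux

open Stmt10Aux in
set_option maxHeartbeats 1000000 in
theorem stmt10 (n r : ℕ) (F₁ F₂ : Finset (Fin r → Fin n))
    (h1 : n ^ (r - 1) < F₁.card) (h2 : n ^ (r - 1) ≤ F₂.card) :
    ∃ e₁ ∈ F₁, ∃ e₂ ∈ F₂, ∀ i, e₁ i ≠ e₂ i := by
  by_contra hcon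
  push_neg at hcon
  have hcard1 : F₁.card ≤ n ^ r := by
    calc F₁.card ≤ Fintype.card (Fin r → Fin n) := Finset.card_le_univ _
      _ = n ^ r := by simp
  have hcard2 : F₂.card ≤ n ^ r := by
    calc F₂.card ≤ Fintype.card (Fin r → Fin n) := Finset.card_le_univ _
      _ = n ^ r := by simp
  -- degenerate cases
  by_cases hdeg : n ≤ 1 ∨ r = 0
  · have hle : n ^ r ≤ n ^ (r - 1) := by
      rcases hdeg with hn | hr
      · interval_cases n
        · rcases Nat.eq_zero_or_pos r with h | h
          · simp [h]
          · have h0 : (0:ℕ) ^ r = 0 := Nat.zero_pow h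
            simp [h0]
        · simp
      · simp [hr]
    omega
  push_neg at hdeg
  obtain ⟨hn, hr⟩ := hdeg
  have hn : 2 ≤ n := hn
  have hr : 1 ≤ r := Nat.one_le_iff_ne_zero.2 hr
  have hkey := key hn hr F₁ F₂ hcon
  -- numeric contradiction
  set a : ℝ := (F₁.card : ℝ)
  set b : ℝ := (F₂.card : ℝ)
  set m : ℝ := (n:ℝ) ^ (r - 1) with hm'
  set c : ℝ := (n:ℝ) - 1 with hc'
  have hn2 : (2:ℝ) ≤ (n:ℝ) := by exact_mod_cast hn
  have hc1 : (1:ℝ) ≤ c := by rw [hc']; linarith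
  have hm1 : (1:ℝ) ≤ m := by rw [hm']; exact one_le_pow₀ (by linarith)
  have hNm : (n:ℝ) ^ r = (n:ℝ) * m := by
    rw [hm', ← pow_succ', Nat.sub_add_cancel hr]
  have ha : m + 1 ≤ a := by
    have : n ^ (r - 1) + 1 ≤ F₁.card := h1
    have := (Nat.cast_le (α := ℝ)).2 this
    push_cast at this
    linarith
  have hb : m ≤ b := by
    have := (Nat.cast_le (α := ℝ)).2 h2
    push_cast at this
    linarith
  have haN : a ≤ (n:ℝ) ^ r := by
    have := (Nat.cast_le (α := ℝ)).2 hcard1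
    push_cast at this
    linarith
  have hbN : b ≤ (n:ℝ) ^ r := by
    have := (Nat.cast_le (α := ℝ)).2 hcard2
    push_cast at this
    linarith
  rw [hNm] at hkey haN hbN
  have hab : (0:ℝ) < a * b := by nlinarith
  have hmain : c ^ 2 * (a * b) ≤ ((n:ℝ) * m - a) * ((n:ℝ) * m - b) := by
    have h' : (c ^ 2 * (a * b)) * (a * b) ≤ (((n:ℝ) * m - a) * ((n:ℝ) * m - b)) * (a * b) := by
      nlinarith [hkey]
    exact le_of_mul_le_mul_right h' hab
  have hup : ((n:ℝ) * m - a) * ((n:ℝ) * m - b) ≤ (c * m - 1) * (c * m) := by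
    apply mul_le_mul
    · rw [hc']; nlinarith
    · rw [hc']; nlinarith
    · linarith
    · nlinarith
  have hlow : c ^ 2 * ((m + 1) * m) ≤ c ^ 2 * (a * b) := by
    have h1 : (m + 1) * m ≤ a * b := by nlinarith
    nlinarith
  nlinarith [hmain, hup, hlow]
end

section
/- If F_1, F_2 ⊆ [n]^r satisfy |F_1|·|F_2| > n^{2(r−1)}, then there exist e_1 ∈ F_1 and e_2 ∈ F_2 that are disjoint. -/
open Finset

namespace Stmt11

variable {n r : ℕ}

/-- off-diagonal coordinate kernel: δ_{uv} - 1/n -/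
noncomputable def dk (n : ℕ) (u v : Fin n) : ℝ := (if u = v then 1 else 0) - 1/n

/-- projection kernel associated to a subset S of coordinates -/
noncomputable def ker (S : Finset (Fin r)) (x y : Fin r → Fin n) : ℝ :=
  ∏ i, if i ∈ S then (1:ℝ)/n else dk n (x i) (y i)

lemma dk_symm (u v : Fin n) : dk n u v = dk n v u := by
  simp [dk, eq_comm]

lemma sum_dk_mul (hn : 0 < n) (u v : Fin n) :
    ∑ a : Fin n, dk n u a * dk n a v = dk n u v := by
  have hn' : (n:ℝ) ≠ 0 := by positivity
  simp only [dk, sub_mul, mul_sub, ite_mul, mul_ite, one_mul, mul_one]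
  rw [Finset.sum_sub_distrib, Finset.sum_sub_distrib]
  simp [Finset.sum_ite_eq, Finset.sum_ite_eq', Finset.card_univ, hn']

end Stmt11

namespace Stmt11

lemma ker_symm (S : Finset (Fin r)) (x y : Fin r → Fin n) : ker S x y = ker S y x := by
  unfold ker
  refine Finset.prod_congr rfl fun i _ => ?_
  by_cases h : i ∈ S <;> simp [h, dk_symm]

lemma ker_idem (hn : 0 < n) (S : Finset (Fin r)) (x y : Fin r → Fin n) :
    ∑ z : Fin r → Fin n, ker S x z * ker S z y = ker S x y := by
  have hn' : (n:ℝ) ≠ 0 := by positivity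
  unfold ker
  calc ∑ z : Fin r → Fin n, ((∏ i, if i ∈ S then (1:ℝ)/n else dk n (x i) (z i)) *
        ∏ i, (if i ∈ S then (1:ℝ)/n else dk n (z i) (y i)))
      = ∑ z : Fin r → Fin n, ∏ i, ((if i ∈ S then (1:ℝ)/n else dk n (x i) (z i)) *
        (if i ∈ S then (1:ℝ)/n else dk n (z i) (y i))) := by
        simp_rw [Finset.prod_mul_distrib]
    _ = ∏ i, ∑ a : Fin n, ((if i ∈ S then (1:ℝ)/n else dk n (x i) a) *
        (if i ∈ S then (1:ℝ)/n else dk n a (y i))) := by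
        rw [Finset.prod_univ_sum]
        rw [Fintype.piFinset_univ]
    _ = ∏ i, (if i ∈ S then (1:ℝ)/n else dk n (x i) (y i)) := by
        refine Finset.prod_congr rfl fun i _ => ?_
        by_cases h : i ∈ S
        · simp only [h, if_true]
          rw [Finset.sum_const, Finset.card_univ, Fintype.card_fin]
          field_simp
          rw [nsmul_eq_mul, div_eq_mul_inv, one_mul, ← mul_assoc, ← sq,
            mul_inv_cancel₀ (pow_ne_zero 2 hn')]
        · simp only [h, if_false]
          exact sum_dk_mul hn _ _

end Stmt11

namespace Stmt11

noncomputable def Rv (S : Finset (Fin r)) (F : Finset (Fin r → Fin n)) (x : Fin r → Fin n) : ℝ :=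
  ∑ y ∈ F, ker S x y

/-- inner product representation of the bilinear form -/
lemma TT_eq (hn : 0 < n) (S : Finset (Fin r)) (F G : Finset (Fin r → Fin n)) :
    ∑ x ∈ F, ∑ y ∈ G, ker S x y = ∑ x : Fin r → Fin n, Rv S F x * Rv S G x := by
  unfold Rv
  symm
  calc ∑ x : Fin r → Fin n, (∑ y ∈ F, ker S x y) * (∑ z ∈ G, ker S x z)
      = ∑ x : Fin r → Fin n, ∑ y ∈ F, ∑ z ∈ G, ker S x y * ker S x z := by
        simp_rw [Finset.sum_mul, Finset.mul_sum]
    _ = ∑ y ∈ F, ∑ z ∈ G, ∑ x : Fin r → Fin n, ker S x y * ker S x z := by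
        rw [Finset.sum_comm]
        refine Finset.sum_congr rfl fun y _ => Finset.sum_comm
    _ = ∑ y ∈ F, ∑ z ∈ G, ker S y z := by
        refine Finset.sum_congr rfl fun y _ => Finset.sum_congr rfl fun z _ => ?_
        calc ∑ x : Fin r → Fin n, ker S x y * ker S x z
            = ∑ x : Fin r → Fin n, ker S y x * ker S x z := by
              simp_rw [fun x => ker_symm S x y]
          _ = ker S y z := ker_idem hn S y z

lemma TT_nonneg (hn : 0 < n) (S : Finset (Fin r)) (F : Finset (Fin r → Fin n)) :
    0 ≤ ∑ x ∈ F, ∑ y ∈ F, ker S x y := by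
  rw [TT_eq hn]
  exact Finset.sum_nonneg fun x _ => mul_self_nonneg _

lemma TT_cs (hn : 0 < n) (S : Finset (Fin r)) (F G : Finset (Fin r → Fin n)) :
    (∑ x ∈ F, ∑ y ∈ G, ker S x y) ^ 2 ≤
      (∑ x ∈ F, ∑ y ∈ F, ker S x y) * (∑ x ∈ G, ∑ y ∈ G, ker S x y) := by
  rw [TT_eq hn, TT_eq hn, TT_eq hn]
  have := Finset.sum_mul_sq_le_sq_mul_sq Finset.univ (Rv S F) (Rv S G)
  simpa [sq] using this

end Stmt11

namespace Stmt11

lemma ker_split (S : Finset (Fin r)) (x y : Fin r → Fin n) :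
    ker S x y = ((1:ℝ)/n) ^ S.card * ∏ i ∈ univ \ S, dk n (x i) (y i) := by
  unfold ker
  rw [Finset.prod_ite]
  congr 1
  · rw [Finset.prod_const]; congr 2; ext a; simp
  · congr 1; ext a; simp

lemma sum_ker_eq (hn : 0 < n) (x y : Fin r → Fin n) :
    ∑ S : Finset (Fin r), ker S x y = if x = y then 1 else 0 := by
  have hn' : (n:ℝ) ≠ 0 := by positivity
  have h := Finset.prod_add (fun _ : Fin r => (1:ℝ)/n) (fun i => dk n (x i) (y i)) univ
  rw [Finset.powerset_univ] at h
  simp_rw [Finset.prod_const] at h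
  calc ∑ S : Finset (Fin r), ker S x y
      = ∑ S : Finset (Fin r), ((1:ℝ)/n) ^ S.card * ∏ i ∈ univ \ S, dk n (x i) (y i) := by
        simp_rw [ker_split]
    _ = ∏ i, ((1:ℝ)/n + dk n (x i) (y i)) := h.symm
    _ = ∏ i, (if x i = y i then (1:ℝ) else 0) := by
        refine Finset.prod_congr rfl fun i _ => ?_
        simp only [dk]
        field_simp
        ring
    _ = if x = y then 1 else 0 := by
        rw [Finset.prod_boole]
        simp [funext_iff]

lemma prodK_eq (hn : 0 < n) (x y : Fin r → Fin n) :
    (∏ i, if x i = y i then (0:ℝ) else 1) =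
      ∑ S : Finset (Fin r), ((n:ℝ)-1) ^ S.card * (-1:ℝ) ^ ((univ \ S).card) * ker S x y := by
  have hn' : (n:ℝ) ≠ 0 := by positivity
  have h := Finset.prod_add (fun _ : Fin r => ((n:ℝ)-1)/n)
      (fun i => -(dk n (x i) (y i))) univ
  rw [Finset.powerset_univ] at h
  calc (∏ i, if x i = y i then (0:ℝ) else 1)
      = ∏ i, (((n:ℝ)-1)/n + -(dk n (x i) (y i))) := by
        refine Finset.prod_congr rfl fun i _ => ?_
        simp only [dk]
        by_cases hxy : x i = y i <;> simp [hxy] <;> field_simp <;> ring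
    _ = ∑ S : Finset (Fin r), (∏ _i ∈ S, ((n:ℝ)-1)/n) * ∏ i ∈ univ \ S, -(dk n (x i) (y i)) := h
    _ = ∑ S : Finset (Fin r), ((n:ℝ)-1) ^ S.card * (-1:ℝ) ^ ((univ \ S).card) * ker S x y := by
        refine Finset.sum_congr rfl fun S _ => ?_
        have h1 : ∀ i ∈ univ \ S, -(dk n (x i) (y i)) = (-1:ℝ) * dk n (x i) (y i) :=
          fun i _ => by ring
        rw [Finset.prod_congr rfl h1, Finset.prod_mul_distrib, Finset.prod_const,
          Finset.prod_const, ker_split, div_pow]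
        ring

end Stmt11

namespace Stmt11

set_option maxHeartbeats 4000000 in
lemma endgame (n r : ℕ) (hn : 2 ≤ n) (hr : 1 ≤ r) (al be : ℝ)
    (hal1 : 1 ≤ al) (hbe1 : 1 ≤ be) (halQ : al ≤ (n:ℝ)^r) (hbeQ : be ≤ (n:ℝ)^r)
    (final : ((n:ℝ)-1)^r * (al * be * ((1/n:ℝ))^r) ≤
      ((n:ℝ)-1)^(r-1) * Real.sqrt ((al - al*al*((1/n:ℝ))^r) * (be - be*be*((1/n:ℝ))^r))) :
    al * be ≤ (n:ℝ)^(2*(r-1)) := by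
  have hn0 : 0 < n := by omega
  have hn' : (n:ℝ) ≠ 0 := by positivity
  have hnR : (2:ℝ) ≤ (n:ℝ) := by exact_mod_cast hn
  have hn1 : (1:ℝ) ≤ (n:ℝ) - 1 := by linarith
  have hal0 : (0:ℝ) ≤ al := by linarith
  have hbe0 : (0:ℝ) ≤ be := by linarith
  set q : ℝ := ((1:ℝ)/n) ^ r with hq
  have hq0 : 0 ≤ q := by rw [hq]; positivity
  set Q : ℝ := (n:ℝ) ^ r with hQdef
  have hQ : (0:ℝ) < Q := by rw [hQdef]; positivity
  have hqQ : q * Q = 1 := by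
    rw [hq, hQdef, div_pow, one_pow, div_mul_cancel₀]
    positivity
  have hq' : 0 < q := by
    rw [hq]; positivity
  set a : ℝ := al * q with ha
  set b : ℝ := be * q with hb
  have ha0 : 0 < a := by
    rw [ha]; exact mul_pos (lt_of_lt_of_le one_pos hal1) hq'
  have hb0 : 0 < b := by
    rw [hb]; exact mul_pos (lt_of_lt_of_le one_pos hbe1) hq'
  have ha1 : a ≤ 1 := by
    rw [ha]
    calc al * q ≤ Q * q := mul_le_mul_of_nonneg_right halQ hq0
      _ = 1 := by rw [mul_comm]; exact hqQ
  have hb1 : b ≤ 1 := by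
    rw [hb]
    calc be * q ≤ Q * q := mul_le_mul_of_nonneg_right hbeQ hq0
      _ = 1 := by rw [mul_comm]; exact hqQ
  -- divide `final` by (n-1)^(r-1)
  have hP : (0:ℝ) < ((n:ℝ)-1)^(r-1) := by positivity
  have hpow : ((n:ℝ)-1)^r = ((n:ℝ)-1)^(r-1) * ((n:ℝ)-1) := by
    rw [← pow_succ]
    congr 1
    omega
  rw [hpow, mul_assoc] at final
  have step1 : ((n:ℝ)-1) * (al * be * q) ≤
      Real.sqrt ((al - al * al * q) * (be - be * be * q)) :=
    le_of_mul_le_mul_left final hP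
  have hX0 : 0 ≤ (al - al * al * q) * (be - be * be * q) := by
    have h1 : al - al * al * q = al * (1 - a) := by rw [ha]; ring
    have h2 : be - be * be * q = be * (1 - b) := by rw [hb]; ring
    rw [h1, h2]
    have h3 := mul_nonneg (mul_nonneg hal0 (by linarith : (0:ℝ) ≤ 1 - a))
      (mul_nonneg hbe0 (by linarith : (0:ℝ) ≤ 1 - b))
    linarith [h3]
  have step2 : (((n:ℝ)-1) * (al * be * q))^2 ≤ (al - al * al * q) * (be - be * be * q) := by
    have hL0 : 0 ≤ ((n:ℝ)-1) * (al * be * q) := by positivity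
    have h4 := mul_self_le_mul_self hL0 step1
    rw [Real.mul_self_sqrt hX0] at h4
    rw [pow_two]
    exact h4
  -- rewrite step2 in terms of a, b
  have halq : al = a * Q := by
    rw [ha, mul_assoc, hqQ, mul_one]
  have hbeq : be = b * Q := by
    rw [hb, mul_assoc, hqQ, mul_one]
  have step3 : (((n:ℝ)-1))^2 * (a*b)^2 ≤ (a*b) * ((1-a) * (1-b)) := by
    have e1 : ((n:ℝ)-1) * (al * be * q) = ((n:ℝ)-1) * (a * b * Q) := by
      rw [halq, hbeq]
      have e0 : a * Q * (b * Q) * q = a * b * Q * (q * Q) := by ring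
      rw [e0, hqQ]
      ring
    have e2 : (al - al * al * q) * (be - be * be * q) = Q^2 * ((a*(1-a)) * (b*(1-b))) := by
      rw [halq, hbeq]
      have e3 : a * Q - a * Q * (a * Q) * q = Q * a - Q * (a * a) * (q * Q) := by ring
      have e4 : b * Q - b * Q * (b * Q) * q = Q * b - Q * (b * b) * (q * Q) := by ring
      rw [e3, e4, hqQ]
      ring
    rw [e1, e2] at step2
    have hQ2 : (0:ℝ) < Q^2 := by positivity
    refine le_of_mul_le_mul_left ?_ hQ2
    calc Q^2 * ((((n:ℝ)-1))^2 * (a*b)^2) = (((n:ℝ)-1) * (a * b * Q))^2 := by ring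
      _ ≤ Q^2 * ((a*(1-a)) * (b*(1-b))) := step2
      _ = Q^2 * ((a*b) * ((1-a) * (1-b))) := by ring
  -- AM-GM part with s = sqrt (a*b)
  set s : ℝ := Real.sqrt (a*b) with hs
  have hs0 : 0 < s := by rw [hs]; positivity
  have hs2 : s^2 = a*b := Real.sq_sqrt (by positivity)
  have hs1 : s ≤ 1 := by
    have hab1 : a * b ≤ 1 := by nlinarith
    rw [hs]
    calc Real.sqrt (a*b) ≤ Real.sqrt 1 := Real.sqrt_le_sqrt hab1
      _ = 1 := Real.sqrt_one
  have ham : 2*s ≤ a + b := by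
    have h1 : s = Real.sqrt a * Real.sqrt b := by rw [hs, Real.sqrt_mul ha0.le]
    have h2 := two_mul_le_add_sq (Real.sqrt a) (Real.sqrt b)
    rw [Real.sq_sqrt ha0.le, Real.sq_sqrt hb0.le] at h2
    rw [h1]
    linarith [h2]
  have step4 : (((n:ℝ)-1))^2 * s^4 ≤ s^2 * (1-s)^2 := by
    have h1 : (1-a)*(1-b) ≤ (1-s)^2 := by nlinarith [hs2, ham]
    calc (((n:ℝ)-1))^2 * s^4 = (((n:ℝ)-1))^2 * (a*b)^2 := by rw [← hs2]; ring
      _ ≤ (a*b) * ((1-a) * (1-b)) := step3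
      _ = s^2 * ((1-a) * (1-b)) := by rw [hs2]
      _ ≤ s^2 * (1-s)^2 := mul_le_mul_of_nonneg_left h1 (sq_nonneg s)
  have step5 : (n:ℝ) * s ≤ 1 := by
    have hs2' : (0:ℝ) < s^2 := by positivity
    have h7 : ((n:ℝ)-1)^2 * s^2 ≤ (1-s)^2 := by
      refine le_of_mul_le_mul_left ?_ hs2'
      calc s^2 * (((n:ℝ)-1)^2 * s^2) = (((n:ℝ)-1))^2 * s^4 := by ring
        _ ≤ s^2 * (1-s)^2 := step4
    have hF : (0:ℝ) < 1 + ((n:ℝ)-2)*s :=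
      lt_of_lt_of_le one_pos (by nlinarith [mul_nonneg (by linarith : (0:ℝ) ≤ (n:ℝ)-2) hs0.le])
    nlinarith [h7, hF, hs0]
  -- conclude
  have hfin : al * be * (n:ℝ)^2 ≤ Q^2 := by
    have e5 : al * be = s^2 * Q^2 := by rw [hs2, halq, hbeq]; ring
    rw [e5]
    have h6 : ((n:ℝ)*s)^2 ≤ 1 := by
      nlinarith [mul_self_le_mul_self (by positivity : (0:ℝ) ≤ (n:ℝ)*s) step5]
    nlinarith [h6, mul_pos hQ hQ]
  have hrhs : (n:ℝ) ^ (2*(r-1)) * (n:ℝ)^2 = Q^2 := by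
    rw [hQdef, ← pow_mul, ← pow_add]
    congr 1
    omega
  have hn2 : (0:ℝ) < (n:ℝ)^2 := by positivity
  refine le_of_mul_le_mul_right ?_ hn2
  rw [hrhs]
  exact hfin


set_option maxHeartbeats 2000000 in
lemma main_bound (hn : 2 ≤ n) (hr : 1 ≤ r) (F₁ F₂ : Finset (Fin r → Fin n))
    (hne₁ : F₁.Nonempty) (hne₂ : F₂.Nonempty)
    (hint : ∀ x ∈ F₁, ∀ y ∈ F₂, ∃ i, x i = y i) :
    (F₁.card : ℝ) * F₂.card ≤ (n:ℝ) ^ (2 * (r - 1)) := by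
  have hn0 : 0 < n := by omega
  have hn' : (n:ℝ) ≠ 0 := by positivity
  have hnR : (2:ℝ) ≤ (n:ℝ) := by exact_mod_cast hn
  -- the coefficients and bilinear forms
  set c : Finset (Fin r) → ℝ :=
    fun S => ((n:ℝ)-1) ^ S.card * (-1:ℝ) ^ ((univ \ S).card) with hc
  set TT : Finset (Fin r) → ℝ := fun S => ∑ x ∈ F₁, ∑ y ∈ F₂, ker S x y with hTT
  set A : Finset (Fin r) → ℝ := fun S => ∑ x ∈ F₁, ∑ y ∈ F₁, ker S x y with hA
  set B : Finset (Fin r) → ℝ := fun S => ∑ x ∈ F₂, ∑ y ∈ F₂, ker S x y with hB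
  -- step 1 : the vanishing identity
  have h0 : (0:ℝ) = ∑ S : Finset (Fin r), c S * TT S := by
    have e1 : (0:ℝ) = ∑ x ∈ F₁, ∑ y ∈ F₂, (∏ i, if x i = y i then (0:ℝ) else 1) := by
      symm
      refine Finset.sum_eq_zero fun x hx => Finset.sum_eq_zero fun y hy => ?_
      obtain ⟨i, hi⟩ := hint x hx y hy
      exact Finset.prod_eq_zero (Finset.mem_univ i) (by simp [hi])
    rw [e1]
    simp_rw [prodK_eq hn0]
    calc ∑ x ∈ F₁, ∑ y ∈ F₂, ∑ S : Finset (Fin r),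
          ((n:ℝ)-1) ^ S.card * (-1:ℝ) ^ ((univ \ S).card) * ker S x y
        = ∑ x ∈ F₁, ∑ S : Finset (Fin r), ∑ y ∈ F₂,
          ((n:ℝ)-1) ^ S.card * (-1:ℝ) ^ ((univ \ S).card) * ker S x y := by
          exact Finset.sum_congr rfl fun x _ => Finset.sum_comm
      _ = ∑ S : Finset (Fin r), ∑ x ∈ F₁, ∑ y ∈ F₂,
          ((n:ℝ)-1) ^ S.card * (-1:ℝ) ^ ((univ \ S).card) * ker S x y := Finset.sum_comm
      _ = ∑ S : Finset (Fin r), c S * TT S := by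
          refine Finset.sum_congr rfl fun S _ => ?_
          rw [hc, hTT]
          simp_rw [Finset.mul_sum]
  -- step 2 : top terms and total energies
  set q : ℝ := ((1:ℝ)/n) ^ r with hq
  set al : ℝ := (F₁.card : ℝ) with hal
  set be : ℝ := (F₂.card : ℝ) with hbe
  have hkertop : ∀ x y : Fin r → Fin n, ker (univ : Finset (Fin r)) x y = q := by
    intro x y
    rw [ker_split, hq]
    simp [Finset.card_univ]
  have hTTtop : TT univ = al * be * q := by
    rw [hTT]
    simp only [hkertop, Finset.sum_const, nsmul_eq_mul]
    rw [hal, hbe]; ring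
  have hAtop : A univ = al * al * q := by
    rw [hA]
    simp only [hkertop, Finset.sum_const, nsmul_eq_mul]
    rw [hal]; ring
  have hBtop : B univ = be * be * q := by
    rw [hB]
    simp only [hkertop, Finset.sum_const, nsmul_eq_mul]
    rw [hbe]; ring
  have hctop : c univ = ((n:ℝ)-1) ^ r := by
    rw [hc]; simp [Finset.card_univ]
  have hAsum : ∑ S : Finset (Fin r), A S = al := by
    rw [hA]
    calc ∑ S : Finset (Fin r), ∑ x ∈ F₁, ∑ y ∈ F₁, ker S x y
        = ∑ x ∈ F₁, ∑ S : Finset (Fin r), ∑ y ∈ F₁, ker S x y := Finset.sum_comm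
      _ = ∑ x ∈ F₁, ∑ y ∈ F₁, ∑ S : Finset (Fin r), ker S x y :=
          Finset.sum_congr rfl fun x _ => Finset.sum_comm
      _ = ∑ x ∈ F₁, ∑ y ∈ F₁, (if x = y then (1:ℝ) else 0) := by
          simp_rw [sum_ker_eq hn0]
      _ = al := by
          rw [hal]
          rw [Finset.sum_congr rfl (fun x hx => Finset.sum_ite_eq F₁ x (fun _ => (1:ℝ)))]
          simp [Finset.sum_ite_of_true]
  have hBsum : ∑ S : Finset (Fin r), B S = be := by
    rw [hB]
    calc ∑ S : Finset (Fin r), ∑ x ∈ F₂, ∑ y ∈ F₂, ker S x y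
        = ∑ x ∈ F₂, ∑ S : Finset (Fin r), ∑ y ∈ F₂, ker S x y := Finset.sum_comm
      _ = ∑ x ∈ F₂, ∑ y ∈ F₂, ∑ S : Finset (Fin r), ker S x y :=
          Finset.sum_congr rfl fun x _ => Finset.sum_comm
      _ = ∑ x ∈ F₂, ∑ y ∈ F₂, (if x = y then (1:ℝ) else 0) := by
          simp_rw [sum_ker_eq hn0]
      _ = be := by
          rw [hbe]
          rw [Finset.sum_congr rfl (fun x hx => Finset.sum_ite_eq F₂ x (fun _ => (1:ℝ)))]
          simp [Finset.sum_ite_of_true]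
  -- step 3 : split off the top term and bound the rest
  set E : Finset (Finset (Fin r)) := (univ : Finset (Finset (Fin r))).erase univ with hE
  have hsplitT : ∑ S ∈ E, (c S * TT S) + c univ * TT univ = ∑ S : Finset (Fin r), c S * TT S :=
    Finset.sum_erase_add _ _ (Finset.mem_univ _)
  have hn1 : (1:ℝ) ≤ (n:ℝ) - 1 := by linarith
  have hn1' : (0:ℝ) ≤ (n:ℝ) - 1 := by linarith
  have hq0 : 0 ≤ q := by positivity
  have hal0 : (0:ℝ) ≤ al := by rw [hal]; positivity
  have hbe0 : (0:ℝ) ≤ be := by rw [hbe]; positivity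
  have hmain : ((n:ℝ)-1)^r * (al * be * q) = -∑ S ∈ E, c S * TT S := by
    rw [← hctop, ← hTTtop]
    linarith [hsplitT, h0]
  have hEA : ∑ S ∈ E, A S = al - al * al * q := by
    have := Finset.sum_erase_add (univ : Finset (Finset (Fin r))) A (Finset.mem_univ univ)
    rw [hAsum, hAtop] at this
    linarith
  have hEB : ∑ S ∈ E, B S = be - be * be * q := by
    have := Finset.sum_erase_add (univ : Finset (Finset (Fin r))) B (Finset.mem_univ univ)
    rw [hBsum, hBtop] at this
    linarith
  have hApos : ∀ S, 0 ≤ A S := fun S => by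
    rw [hA]; exact TT_nonneg hn0 S F₁
  have hBpos : ∀ S, 0 ≤ B S := fun S => by
    rw [hB]; exact TT_nonneg hn0 S F₂
  have hcs : ∀ S ∈ E, |c S * TT S| ≤ ((n:ℝ)-1)^(r-1) * Real.sqrt (A S * B S) := by
    intro S hS
    have hSne : S ≠ univ := (Finset.mem_erase.1 hS).1
    have hcard : S.card ≤ r - 1 := by
      have h1 : S.card < Fintype.card (Fin r) :=
        Finset.card_lt_card (Finset.ssubset_univ_iff.2 hSne)
      rw [Fintype.card_fin] at h1
      omega
    have habs : |c S| ≤ ((n:ℝ)-1)^(r-1) := by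
      rw [hc]
      rw [abs_mul, abs_pow, abs_pow, abs_neg, abs_one, one_pow, mul_one,
        abs_of_nonneg hn1']
      exact pow_le_pow_right₀ hn1 hcard
    have hTT2 : TT S ^ 2 ≤ A S * B S := by
      rw [hTT, hA, hB]; exact TT_cs hn0 S F₁ F₂
    have habs2 : |TT S| ≤ Real.sqrt (A S * B S) := by
      rw [← Real.sqrt_sq_eq_abs]
      exact Real.sqrt_le_sqrt hTT2
    rw [abs_mul]
    exact mul_le_mul habs habs2 (abs_nonneg _) (by positivity)
  have hsq : ∑ S ∈ E, Real.sqrt (A S * B S) ≤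
      Real.sqrt ((al - al * al * q) * (be - be * be * q)) := by
    have h2 := Finset.sum_sq_le_sum_mul_sum_of_sq_eq_mul E
      (r := fun S => Real.sqrt (A S * B S)) (f := A) (g := B)
      (fun S _ => hApos S) (fun S _ => hBpos S)
      (fun S _ => Real.sq_sqrt (mul_nonneg (hApos S) (hBpos S)))
    rw [hEA, hEB] at h2
    have h3 : 0 ≤ ∑ S ∈ E, Real.sqrt (A S * B S) :=
      Finset.sum_nonneg fun S _ => Real.sqrt_nonneg _
    calc ∑ S ∈ E, Real.sqrt (A S * B S)
        = Real.sqrt ((∑ S ∈ E, Real.sqrt (A S * B S)) ^ 2) := (Real.sqrt_sq h3).symm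
      _ ≤ Real.sqrt ((al - al * al * q) * (be - be * be * q)) := Real.sqrt_le_sqrt h2
  have final : ((n:ℝ)-1)^r * (al * be * q) ≤
      ((n:ℝ)-1)^(r-1) * Real.sqrt ((al - al * al * q) * (be - be * be * q)) := by
    calc ((n:ℝ)-1)^r * (al * be * q) = -∑ S ∈ E, c S * TT S := hmain
      _ ≤ |∑ S ∈ E, c S * TT S| := neg_le_abs _
      _ ≤ ∑ S ∈ E, |c S * TT S| := Finset.abs_sum_le_sum_abs _ _
      _ ≤ ∑ S ∈ E, ((n:ℝ)-1)^(r-1) * Real.sqrt (A S * B S) := Finset.sum_le_sum hcs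
      _ = ((n:ℝ)-1)^(r-1) * ∑ S ∈ E, Real.sqrt (A S * B S) := by rw [Finset.mul_sum]
      _ ≤ ((n:ℝ)-1)^(r-1) * Real.sqrt ((al - al * al * q) * (be - be * be * q)) :=
          mul_le_mul_of_nonneg_left hsq (by positivity)
  -- step 4 : use the endgame lemma
  have hal1 : (1:ℝ) ≤ al := by
    rw [hal]; exact_mod_cast Finset.card_pos.2 hne₁
  have hbe1 : (1:ℝ) ≤ be := by
    rw [hbe]; exact_mod_cast Finset.card_pos.2 hne₂
  have halQ : al ≤ (n:ℝ)^r := by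
    rw [hal]
    have h1 : F₁.card ≤ n ^ r := by
      have h2 := Finset.card_le_univ F₁
      simpa [Finset.card_univ, Fintype.card_fun] using h2
    exact_mod_cast h1
  have hbeQ : be ≤ (n:ℝ)^r := by
    rw [hbe]
    have h1 : F₂.card ≤ n ^ r := by
      have h2 := Finset.card_le_univ F₂
      simpa [Finset.card_univ, Fintype.card_fun] using h2
    exact_mod_cast h1
  have := endgame n r hn hr al be hal1 hbe1 halQ hbeQ (by rw [← hq]; exact final)
  rw [hal, hbe] at this
  exact this

end Stmt11

theorem stmt11 (n r : ℕ) (F₁ F₂ : Finset (Fin r → Fin n))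
    (h : n ^ (2 * (r - 1)) < F₁.card * F₂.card) :
    ∃ e₁ ∈ F₁, ∃ e₂ ∈ F₂, ∀ i, e₁ i ≠ e₂ i := by
  by_contra hcon
  push_neg at hcon
  have hprod : 0 < F₁.card * F₂.card := lt_of_le_of_lt (Nat.zero_le _) h
  have hc1 : 0 < F₁.card := Nat.pos_of_mul_pos_left (by rwa [mul_comm] at hprod)
  have hc2 : 0 < F₂.card := Nat.pos_of_mul_pos_left hprod
  have hne₁ : F₁.Nonempty := Finset.card_pos.1 hc1
  have hne₂ : F₂.Nonempty := Finset.card_pos.1 hc2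
  -- r = 0 : vacuous intersection condition gives a contradiction immediately
  rcases Nat.eq_zero_or_pos r with hr0 | hr
  · subst hr0
    obtain ⟨e₁, he₁⟩ := hne₁
    obtain ⟨e₂, he₂⟩ := hne₂
    obtain ⟨i, -⟩ := hcon e₁ he₁ e₂ he₂
    exact i.elim0
  -- n = 0 : the type is empty
  rcases Nat.eq_zero_or_pos n with hn0 | hn0
  · subst hn0
    obtain ⟨e₁, -⟩ := hne₁
    exact (e₁ ⟨0, hr⟩).elim0
  rcases Nat.lt_or_ge n 2 with hn1 | hn2
  -- n = 1 : everything has size at most one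
  · interval_cases n
    have h1 : F₁.card ≤ 1 := by
      have h2 := Finset.card_le_univ F₁
      simpa [Finset.card_univ, Fintype.card_fun] using h2
    have h2 : F₂.card ≤ 1 := by
      have h2 := Finset.card_le_univ F₂
      simpa [Finset.card_univ, Fintype.card_fun] using h2
    simp at h
    have h3 := Nat.mul_le_mul h1 h2
    omega
  -- main case
  · have hb := Stmt11.main_bound hn2 hr F₁ F₂ hne₁ hne₂ hcon
    have hcast : ((n:ℝ)) ^ (2 * (r - 1)) < (F₁.card : ℝ) * F₂.card := by
      exact_mod_cast h
    linarith
end
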